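/- arXiv:2111.02116 — 6 statements merged into one kernel-verified Lean document; each statement's English description precedes it below -/
import Mathlib

section
/- For x ∈ ℝ, the 3×3 matrix M with rows (1, x, x²), (x, 1/4 + x/2 + x²/4, x), (x², x, 1) is positive semidefinite if and only if x ∈ [-2 + √3, 1]. -/
theorem octahedron_gibbs_psd_iff (x : ℝ) :
    (Matrix.PosSemidef
      !![1, x, x^2;
         x, 1/4 + x/2 + x^2/4, x;
         x^2, x, 1]) ↔
    x ∈ Set.Icc (-2 + Real.sqrt 3) 1 := by
  have s3 : (1:ℝ) < Real.sqrt 3 ∧ Real.sqrt 3 < 2 := by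
    constructor <;>
    nlinarith [Real.sq_sqrt (by norm_num : (3:ℝ) ≥ 0), Real.sqrt_nonneg 3]
  constructor
  · intro h
    have hQ : ∀ a b c : ℝ,
        0 ≤ a^2 + c^2 + (1/4 + x/2 + x^2/4)*b^2 + 2*a*b*x + 2*b*c*x + 2*a*c*x^2 := by
      intro a b c
      have := h.dotProduct_mulVec_nonneg ![a, b, c]
      simp [Matrix.mulVec, dotProduct, Fin.sum_univ_succ] at this
      ring_nf at this ⊢
      linarith
    have e1 := hQ 1 0 (-1)
    have hx2 : x ≤ 1 := by nlinarith
    have e2 := hQ 1 1 0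
    have hx1 : -1 < x := by nlinarith
    refine ⟨?_, hx2⟩
    rcases eq_or_lt_of_le hx2 with rfl | hlt
    · linarith [s3.2]
    · have e3 := hQ ((1+x)^2) (-8*x) ((1+x)^2)
      have hg : 0 ≤ (x-1)^2 * (x^2 + 4*x + 1) := by nlinarith [sq_nonneg (1+x)]
      have h4 : 0 ≤ x^2 + 4*x + 1 := by nlinarith [sq_nonneg (x-1)]
      nlinarith [Real.sq_sqrt (by norm_num : (3:ℝ) ≥ 0), Real.sqrt_nonneg 3]
  · rintro ⟨h1, h2⟩
    have hx1 : -1 < x := by linarith [s3.1]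
    have h4 : 0 ≤ x^2 + 4*x + 1 := by
      nlinarith [Real.sq_sqrt (by norm_num : (3:ℝ) ≥ 0), Real.sqrt_nonneg 3]
    have h3x : 0 < 1 + 3*x := by
      nlinarith [Real.sq_sqrt (by norm_num : (3:ℝ) ≥ 0), Real.sqrt_nonneg 3]
    refine Matrix.PosSemidef.of_dotProduct_mulVec_nonneg ?_ ?_
    · show _ = _
      ext i j
      fin_cases i <;> fin_cases j <;> simp
    · intro v
      have key : ∀ a b c : ℝ,
          0 ≤ a^2 + c^2 + (1/4 + x/2 + x^2/4)*b^2 + 2*a*b*x + 2*b*c*x + 2*a*c*x^2 := by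
        intro a b c
        rcases eq_or_lt_of_le h2 with rfl | hlt
        · nlinarith [sq_nonneg (a + b + c)]
        · have hA : 0 < (1-x)*(1+3*x)/4 := by
            have : 0 < 1 - x := by linarith
            positivity
          nlinarith [mul_nonneg (mul_nonneg (sq_nonneg (x-1)) h4) (sq_nonneg c),
            sq_nonneg ((1-x)*(1+3*x)/4*b + x*(1-x^2)*c),
            mul_pos hA hA,
            mul_nonneg hA.le (sq_nonneg (a + x*b + x^2*c))]
      have := key (v 0) (v 1) (v 2)
      simp [Matrix.mulVec, dotProduct, Fin.sum_univ_succ]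
      ring_nf at this ⊢
      linarith
end

section
/- Let V be a finite set and suppose for each n ∈ ℕ the kernel Q_n : V × V → ℝ is positive semidefinite, where Q_n(u,v) = (x_n)^{d(u,v)} for a metric d on V with values in ℕ, with x_n ∈ (0,1) and lim_{n→∞} x_n = 1. Then for every x ∈ [0,1] the kernel Q_x(u,v) = x^{d(u,v)} is positive semidefinite (with the convention 0^0 = 1). -/
open scoped ComplexOrder

open Filter Topology

private lemma psd_aux_isClosed : IsClosed {z : ℂ | 0 ≤ z} := by
  have h : {z : ℂ | 0 ≤ z} = Complex.re ⁻¹' Set.Ici 0 ∩ Complex.im ⁻¹' {0} := by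
    ext z
    simp [Complex.le_def, eq_comm]
  rw [h]
  exact (isClosed_Ici.preimage Complex.continuous_re).inter
    (isClosed_singleton.preimage Complex.continuous_im)

private lemma psd_aux_lim {f : ℕ → ℂ} {L : ℂ}
    (h : Filter.Tendsto f Filter.atTop (nhds L)) (h0 : ∀ n, 0 ≤ f n) : 0 ≤ L :=
  psd_aux_isClosed.mem_of_tendsto h (Filter.Eventually.of_forall h0)

/-- `A` is a Gram matrix of some family of vectors. -/
private def HasGram {N : ℕ} (A : Fin N → Fin N → ℂ) : Prop :=
  ∃ (ι : Type) (_ : Fintype ι) (f : ι → Fin N → ℂ),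
    ∀ i j, A i j = ∑ k, (starRingEnd ℂ) (f k i) * f k j

private lemma HasGram.sum_nonneg {N : ℕ} {A : Fin N → Fin N → ℂ} (hA : HasGram A)
    (c : Fin N → ℂ) : 0 ≤ ∑ i, ∑ j, c i * (starRingEnd ℂ) (c j) * A i j := by
  obtain ⟨ι, _, f, hf⟩ := hA
  have key : (∑ i, ∑ j, c i * (starRingEnd ℂ) (c j) * A i j)
      = ∑ k, (∑ i, c i * (starRingEnd ℂ) (f k i)) *
          (starRingEnd ℂ) (∑ i, c i * (starRingEnd ℂ) (f k i)) := by
    calc (∑ i, ∑ j, c i * (starRingEnd ℂ) (c j) * A i j)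
        = ∑ i, ∑ j, ∑ k, c i * (starRingEnd ℂ) (c j) *
            ((starRingEnd ℂ) (f k i) * f k j) := by
          refine Finset.sum_congr rfl fun i _ => Finset.sum_congr rfl fun j _ => ?_
          rw [hf, Finset.mul_sum]
      _ = ∑ i, ∑ k, ∑ j, c i * (starRingEnd ℂ) (c j) *
            ((starRingEnd ℂ) (f k i) * f k j) :=
          Finset.sum_congr rfl fun i _ => Finset.sum_comm
      _ = ∑ k, ∑ i, ∑ j, c i * (starRingEnd ℂ) (c j) *
            ((starRingEnd ℂ) (f k i) * f k j) := Finset.sum_comm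
      _ = ∑ k, (∑ i, c i * (starRingEnd ℂ) (f k i)) *
            (starRingEnd ℂ) (∑ i, c i * (starRingEnd ℂ) (f k i)) := by
          refine Finset.sum_congr rfl fun k _ => ?_
          rw [map_sum, Finset.sum_mul_sum]
          refine Finset.sum_congr rfl fun i _ => Finset.sum_congr rfl fun j _ => ?_
          simp only [map_mul, RingHomCompTriple.comp_apply, RingHom.id_apply,
            Complex.conj_conj]
          ring
  rw [key]
  refine Finset.sum_nonneg fun k _ => ?_
  rw [Complex.mul_conj]
  exact Complex.zero_le_real.mpr (Complex.normSq_nonneg _)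

private lemma HasGram.mul {N : ℕ} {A B : Fin N → Fin N → ℂ} (hA : HasGram A)
    (hB : HasGram B) : HasGram (fun i j => A i j * B i j) := by
  obtain ⟨ι, _, f, hf⟩ := hA
  obtain ⟨κ, _, g, hg⟩ := hB
  refine ⟨ι × κ, inferInstance, fun p i => f p.1 i * g p.2 i, fun i j => ?_⟩
  show A i j * B i j = _
  rw [hf, hg, Fintype.sum_prod_type, Finset.sum_mul_sum]
  refine Finset.sum_congr rfl fun k _ => Finset.sum_congr rfl fun l _ => ?_
  simp only [map_mul]
  ring

private lemma HasGram.one {N : ℕ} : HasGram (fun _ _ : Fin N => (1 : ℂ)) :=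
  ⟨Unit, inferInstance, fun _ _ => 1, fun i j => by simp⟩

private lemma HasGram.pow {N : ℕ} {A : Fin N → Fin N → ℂ} (hA : HasGram A) (m : ℕ) :
    HasGram (fun i j => A i j ^ m) := by
  induction m with
  | zero => simpa using HasGram.one
  | succ m ih =>
      have := ih.mul hA
      simpa [pow_succ] using this

/-- A real symmetric kernel matrix with nonnegative quadratic form is a Gram matrix. -/
private lemma hasGram_of_psd {N : ℕ} (q : Fin N → Fin N → ℝ)
    (hsymm : ∀ i j, q i j = q j i)
    (hq : ∀ c : Fin N → ℂ, 0 ≤ ∑ i, ∑ j, c i * (starRingEnd ℂ) (c j) * ((q i j : ℝ) : ℂ)) :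
    HasGram (fun i j => ((q i j : ℝ) : ℂ)) := by
  set M : Matrix (Fin N) (Fin N) ℂ := Matrix.of fun i j => ((q i j : ℝ) : ℂ) with hM
  have hPSD : M.PosSemidef := by
    rw [Matrix.posSemidef_iff_dotProduct_mulVec]
    constructor
    · ext i j
      simp [hM, Matrix.conjTranspose_apply, hsymm i j]
    · intro v
      have := hq (star v)
      have heq : (dotProduct (star v) (M.mulVec v))
          = ∑ i, ∑ j, (star v) i * (starRingEnd ℂ) ((star v) j) * ((q i j : ℝ) : ℂ) := by
        simp only [dotProduct, Matrix.mulVec, dotProduct, Finset.mul_sum]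
        refine Finset.sum_congr rfl fun i _ => Finset.sum_congr rfl fun j _ => ?_
        simp [hM, Pi.star_apply]
        ring
      rw [heq]
      exact this
  obtain ⟨B, hB⟩ : ∃ B : Matrix (Fin N) (Fin N) ℂ, M = B.conjTranspose * B := by
    open scoped MatrixOrder in
    obtain ⟨B, hB⟩ := CStarAlgebra.nonneg_iff_eq_star_mul_self.mp hPSD.nonneg
    exact ⟨B, hB⟩
  refine ⟨Fin N, inferInstance, fun k i => B k i, fun i j => ?_⟩
  have : M i j = (B.conjTranspose * B) i j := by rw [hB]
  simpa [Matrix.mul_apply, Matrix.conjTranspose_apply, hM] using this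

/-- A kernel `Q : V × V → ℝ` is positive semidefinite if
`Σ_{i,j} c_i conj(c_j) Q(u_i,u_j) ≥ 0` for all finite families of points and
complex coefficients. -/
def IsPSDKernel {V : Type*} (Q : V → V → ℝ) : Prop :=
  ∀ (n : ℕ) (u : Fin n → V) (c : Fin n → ℂ),
    0 ≤ ∑ i : Fin n, ∑ j : Fin n, c i * (starRingEnd ℂ) (c j) * ((Q (u i) (u j) : ℝ) : ℂ)

theorem gibbs_psd_of_seq_tendsto_one {V : Type*} [Finite V] (d : V → V → ℕ)
    (hsymm : ∀ u v, d u v = d v u)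
    (hzero : ∀ u v, d u v = 0 ↔ u = v)
    (htriangle : ∀ u v w, d u w ≤ d u v + d v w)
    (x : ℕ → ℝ) (hx : ∀ n, x n ∈ Set.Ioo (0 : ℝ) 1)
    (hlim : Filter.Tendsto x Filter.atTop (nhds 1))
    (hpsd : ∀ n, IsPSDKernel (fun u v => (x n) ^ d u v)) :
    ∀ y ∈ Set.Icc (0 : ℝ) 1, IsPSDKernel (fun u v => y ^ d u v) := by
  -- Step A: prove for `y ∈ (0,1)`.
  have key : ∀ y ∈ Set.Ioo (0 : ℝ) 1, IsPSDKernel (fun u v => y ^ d u v) := by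
    intro y hy N u c
    set t : ℝ := -Real.log y with ht
    have hy0 : 0 < y := hy.1
    have hy1 : y < 1 := hy.2
    have ht0 : 0 < t := by
      rw [ht, neg_pos]
      exact Real.log_neg hy0 hy1
    -- the approximating kernels
    set D : Fin N → Fin N → ℕ := fun i j => d (u i) (u j) with hD
    set A : ℕ → Fin N → Fin N → ℝ := fun n i j =>
      Real.exp (-(t / (1 - x n))) * Real.exp (t / (1 - x n) * (x n) ^ D i j) with hA
    -- each A n is PSD
    have hAn : ∀ n, 0 ≤ ∑ i, ∑ j, c i * (starRingEnd ℂ) (c j) * ((A n i j : ℝ) : ℂ) := by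
      intro n
      obtain ⟨hx0, hx1⟩ := hx n
      set s : ℝ := t / (1 - x n) with hs
      have hs0 : 0 ≤ s := le_of_lt (div_pos ht0 (by linarith))
      -- Gram property of q = (x n) ^ D
      have hG : HasGram (fun i j => (((x n) ^ D i j : ℝ) : ℂ)) := by
        refine hasGram_of_psd _ (fun i j =>
          show x n ^ d (u i) (u j) = x n ^ d (u j) (u i) by rw [hsymm]) ?_
        intro c'
        exact hpsd n N u c'
      -- partial sums of the exponential are nonneg
      have hpart : ∀ M : ℕ, 0 ≤ ∑ i, ∑ j, c i * (starRingEnd ℂ) (c j) *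
          ((∑ m ∈ Finset.range M, (s * (x n) ^ D i j) ^ m / (Nat.factorial m) : ℝ) : ℂ) := by
        intro M
        have hrw : (∑ i, ∑ j, c i * (starRingEnd ℂ) (c j) *
            ((∑ m ∈ Finset.range M, (s * (x n) ^ D i j) ^ m / (Nat.factorial m) : ℝ) : ℂ))
            = ∑ m ∈ Finset.range M, ((s ^ m / (Nat.factorial m) : ℝ) : ℂ) *
                ∑ i, ∑ j, c i * (starRingEnd ℂ) (c j) * ((((x n) ^ D i j : ℝ) : ℂ)) ^ m := by
          calc (∑ i, ∑ j, c i * (starRingEnd ℂ) (c j) *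
              ((∑ m ∈ Finset.range M, (s * (x n) ^ D i j) ^ m / (Nat.factorial m) : ℝ) : ℂ))
              = ∑ i, ∑ j, ∑ m ∈ Finset.range M, ((s ^ m / (Nat.factorial m) : ℝ) : ℂ) *
                  (c i * (starRingEnd ℂ) (c j) * ((((x n) ^ D i j : ℝ) : ℂ)) ^ m) := by
                refine Finset.sum_congr rfl fun i _ => Finset.sum_congr rfl fun j _ => ?_
                push_cast
                rw [Finset.mul_sum]
                refine Finset.sum_congr rfl fun m _ => ?_
                rw [mul_pow]
                ring
            _ = ∑ i, ∑ m ∈ Finset.range M, ∑ j, ((s ^ m / (Nat.factorial m) : ℝ) : ℂ) *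
                  (c i * (starRingEnd ℂ) (c j) * ((((x n) ^ D i j : ℝ) : ℂ)) ^ m) :=
                Finset.sum_congr rfl fun i _ => Finset.sum_comm
            _ = ∑ m ∈ Finset.range M, ∑ i, ∑ j, ((s ^ m / (Nat.factorial m) : ℝ) : ℂ) *
                  (c i * (starRingEnd ℂ) (c j) * ((((x n) ^ D i j : ℝ) : ℂ)) ^ m) :=
                Finset.sum_comm
            _ = ∑ m ∈ Finset.range M, ((s ^ m / (Nat.factorial m) : ℝ) : ℂ) *
                  ∑ i, ∑ j, c i * (starRingEnd ℂ) (c j) * ((((x n) ^ D i j : ℝ) : ℂ)) ^ m := by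
                refine Finset.sum_congr rfl fun m _ => ?_
                rw [Finset.mul_sum]
                refine Finset.sum_congr rfl fun i _ => ?_
                rw [Finset.mul_sum]
        rw [hrw]
        refine Finset.sum_nonneg fun m _ => mul_nonneg ?_ ?_
        · rw [Complex.zero_le_real]
          positivity
        · exact (hG.pow m).sum_nonneg c
      -- take the limit in M
      have hlimM : Filter.Tendsto (fun M => ∑ i, ∑ j, c i * (starRingEnd ℂ) (c j) *
          ((∑ m ∈ Finset.range M, (s * (x n) ^ D i j) ^ m / (Nat.factorial m) : ℝ) : ℂ))
          Filter.atTop (nhds (∑ i, ∑ j, c i * (starRingEnd ℂ) (c j) *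
            ((Real.exp (s * (x n) ^ D i j) : ℝ) : ℂ))) := by
        refine tendsto_finset_sum _ fun i _ => tendsto_finset_sum _ fun j _ => ?_
        refine Filter.Tendsto.const_mul _ ?_
        have hsum : HasSum (fun m : ℕ => (s * (x n) ^ D i j) ^ m / (Nat.factorial m))
            (Real.exp (s * (x n) ^ D i j)) := by
          rw [Real.exp_eq_exp_ℝ]
          exact NormedSpace.expSeries_div_hasSum_exp _
        exact (Complex.continuous_ofReal.tendsto _).comp hsum.tendsto_sum_nat
      have hexp : 0 ≤ ∑ i, ∑ j, c i * (starRingEnd ℂ) (c j) *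
          ((Real.exp (s * (x n) ^ D i j) : ℝ) : ℂ) := psd_aux_lim hlimM hpart
      -- multiply by the positive constant
      have hconst : (0 : ℝ) ≤ Real.exp (-(t / (1 - x n))) := (Real.exp_pos _).le
      have hrw2 : (∑ i, ∑ j, c i * (starRingEnd ℂ) (c j) * ((A n i j : ℝ) : ℂ))
          = ((Real.exp (-(t / (1 - x n))) : ℝ) : ℂ) *
            ∑ i, ∑ j, c i * (starRingEnd ℂ) (c j) * ((Real.exp (s * (x n) ^ D i j) : ℝ) : ℂ) := by
        rw [Finset.mul_sum]
        refine Finset.sum_congr rfl fun i _ => ?_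
        rw [Finset.mul_sum]
        refine Finset.sum_congr rfl fun j _ => ?_
        rw [show A n i j = Real.exp (-(t / (1 - x n))) * Real.exp (s * (x n) ^ D i j) from rfl,
          Complex.ofReal_mul]
        ring
      rw [hrw2]
      exact mul_nonneg (Complex.zero_le_real.mpr hconst) hexp
    -- A n converges pointwise to y ^ D
    have hAconv : ∀ i j, Filter.Tendsto (fun n => A n i j) Filter.atTop (nhds (y ^ D i j)) := by
      intro i j
      have hform : ∀ n, A n i j = Real.exp (-t * ∑ k ∈ Finset.range (D i j), (x n) ^ k) := by
        intro n
        obtain ⟨hx0, hx1⟩ := hx n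
        have hne : x n ≠ 1 := ne_of_lt hx1
        have hne' : (1 : ℝ) - x n ≠ 0 := by intro h; apply hne; linarith
        show Real.exp (-(t / (1 - x n))) * Real.exp (t / (1 - x n) * (x n) ^ D i j)
            = Real.exp (-t * ∑ k ∈ Finset.range (D i j), (x n) ^ k)
        rw [← Real.exp_add]
        congr 1
        have hne2 : x n - 1 ≠ 0 := sub_ne_zero.mpr hne
        rw [geom_sum_eq hne]
        field_simp
        ring
      simp only [hform]
      have h1 : Filter.Tendsto (fun n => -t * ∑ k ∈ Finset.range (D i j), (x n) ^ k)
          Filter.atTop (nhds (-t * (D i j : ℝ))) := by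
        have h2 : Filter.Tendsto (fun n => ∑ k ∈ Finset.range (D i j), (x n) ^ k)
            Filter.atTop (nhds (∑ k ∈ Finset.range (D i j), (1 : ℝ) ^ k)) := by
          refine tendsto_finset_sum _ fun k _ => ?_
          exact hlim.pow k
        simpa using h2.const_mul (-t)
      have h3 := (Real.continuous_exp.tendsto _).comp h1
      have h4 : Real.exp (-t * (D i j : ℝ)) = y ^ D i j := by
        rw [mul_comm, Real.exp_nat_mul, ht, neg_neg, Real.exp_log hy0]
      rw [← h4]
      exact h3
    -- conclude
    have hfin : Filter.Tendsto (fun n => ∑ i, ∑ j, c i * (starRingEnd ℂ) (c j) *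
        ((A n i j : ℝ) : ℂ)) Filter.atTop
        (nhds (∑ i, ∑ j, c i * (starRingEnd ℂ) (c j) * ((y ^ D i j : ℝ) : ℂ))) := by
      refine tendsto_finset_sum _ fun i _ => tendsto_finset_sum _ fun j _ => ?_
      exact Filter.Tendsto.const_mul _
        ((Complex.continuous_ofReal.tendsto _).comp (hAconv i j))
    exact psd_aux_lim hfin hAn
  -- Step B: extend to `[0,1]` by continuity.
  intro y hy N u c
  set F : ℝ → ℂ := fun z => ∑ i, ∑ j, c i * (starRingEnd ℂ) (c j) *
    (((z ^ d (u i) (u j) : ℝ)) : ℂ) with hF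
  have hcont : Continuous F := by
    refine continuous_finset_sum _ fun i _ => continuous_finset_sum _ fun j _ => ?_
    exact continuous_const.mul (Complex.continuous_ofReal.comp (continuous_pow _))
  have hclosed : IsClosed {z : ℝ | 0 ≤ F z} := psd_aux_isClosed.preimage hcont
  have hsub : Set.Ioo (0 : ℝ) 1 ⊆ {z : ℝ | 0 ≤ F z} := fun z hz => key z hz N u c
  have hIcc : Set.Icc (0 : ℝ) 1 ⊆ {z : ℝ | 0 ≤ F z} := by
    rw [← closure_Ioo (by norm_num : (0 : ℝ) ≠ 1)]
    exact closure_minimal hsub hclosed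
  exact hIcc hy
end

section
/- Let N ≥ 2, D ≥ 1 and let V = {1,…,N}^D with the Hamming distance d(u,v) = |{i : u_i ≠ v_i}|. For x ∈ ℝ the kernel Q_x(u,v) = x^{d(u,v)} (with 0^0 = 1) is positive semidefinite on V if and only if x ∈ [−1/(N−1), 1]. -/
open scoped ComplexOrder

section aux

variable {N D : ℕ}

/-- one-coordinate feature map -/
noncomputable def hamFeat (N : ℕ) (x : ℝ) (a : Fin N) : Fin N ⊕ Unit → ℝ :=
  Sum.elim (fun k => Real.sqrt (1 - x) * ((if a = k then 1 else 0) - 1 / N))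
    (fun _ => Real.sqrt ((1 + ((N : ℝ) - 1) * x) / N))

lemma hamFeat_inner (hN : 2 ≤ N) {x : ℝ} (hx : x ∈ Set.Icc (-1 / ((N : ℝ) - 1)) 1)
    (a b : Fin N) :
    ∑ k : Fin N ⊕ Unit, hamFeat N x a k * hamFeat N x b k = if a = b then 1 else x := by
  have hNR : (2 : ℝ) ≤ (N : ℝ) := by exact_mod_cast hN
  have hN1 : (0 : ℝ) < (N : ℝ) - 1 := by linarith
  have hNpos : (0 : ℝ) < (N : ℝ) := by linarith
  have hNne : ((N : ℝ)) ≠ 0 := ne_of_gt hNpos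
  have h1 : (0 : ℝ) ≤ 1 - x := by linarith [hx.2]
  have h2 : (0 : ℝ) ≤ (1 + ((N : ℝ) - 1) * x) / N := by
    have := (div_le_iff₀ hN1).mp hx.1
    have : (-1 : ℝ) ≤ x * ((N : ℝ) - 1) := this
    apply div_nonneg _ (le_of_lt hNpos)
    nlinarith
  rw [Fintype.sum_sum_type]
  have hs : ∀ k : Fin N,
      hamFeat N x a (Sum.inl k) * hamFeat N x b (Sum.inl k)
        = (1 - x) * (((if a = k then (1:ℝ) else 0) * (if b = k then 1 else 0))
            - (if a = k then (1:ℝ) else 0) / N - (if b = k then (1:ℝ) else 0) / N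
            + 1 / ((N : ℝ) * N)) := by
    intro k
    simp only [hamFeat, Sum.elim_inl]
    rw [mul_mul_mul_comm, Real.mul_self_sqrt h1]
    ring
  have ht : ∀ u : Unit, hamFeat N x a (Sum.inr u) * hamFeat N x b (Sum.inr u)
      = (1 + ((N : ℝ) - 1) * x) / N := by
    intro u
    simp only [hamFeat, Sum.elim_inr]
    exact Real.mul_self_sqrt h2
  simp_rw [hs, ht]
  have hδ : ∑ k : Fin N, ((if a = k then (1:ℝ) else 0) * (if b = k then 1 else 0))
      = if a = b then 1 else 0 := by
    simp_rw [ite_mul, one_mul, zero_mul]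
    rw [Finset.sum_ite_eq]
    simp [eq_comm]
  have hδa : ∑ k : Fin N, (if a = k then (1:ℝ) else 0) = 1 := by
    rw [Finset.sum_ite_eq]; simp
  have hδb : ∑ k : Fin N, (if b = k then (1:ℝ) else 0) = 1 := by
    rw [Finset.sum_ite_eq]; simp
  have hsum : ∑ k : Fin N, (1 - x) * (((if a = k then (1:ℝ) else 0) * (if b = k then 1 else 0))
            - (if a = k then (1:ℝ) else 0) / N - (if b = k then (1:ℝ) else 0) / N
            + 1 / ((N : ℝ) * N))
      = (1 - x) * ((if a = b then 1 else 0) - 1 / N) := by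
    rw [← Finset.mul_sum]
    congr 1
    rw [show (fun k : Fin N => ((if a = k then (1:ℝ) else 0) * (if b = k then 1 else 0))
            - (if a = k then (1:ℝ) else 0) / N - (if b = k then (1:ℝ) else 0) / N
            + 1 / ((N : ℝ) * N)) = fun k =>
        ((if a = k then (1:ℝ) else 0) * (if b = k then 1 else 0))
            - (if a = k then (1:ℝ) else 0) / N - (if b = k then (1:ℝ) else 0) / N
            + 1 / ((N : ℝ) * N) from rfl]
    simp_rw [Finset.sum_add_distrib, Finset.sum_sub_distrib, ← Finset.sum_div, hδ, hδa, hδb,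
      Finset.sum_const, Finset.card_univ, Fintype.card_fin, nsmul_eq_mul]
    field_simp
    ring
  rw [hsum]
  simp only [Finset.sum_const, Finset.card_univ, Fintype.card_unit, one_smul]
  by_cases hab : a = b
  · simp only [hab, if_pos rfl, if_true]
    field_simp
    ring
  · simp only [if_neg hab]
    field_simp
    ring

end aux

theorem hamming_gibbs_psd_iff (N D : ℕ) (hN : 2 ≤ N) (hD : 1 ≤ D) (x : ℝ) :
    IsPSDKernel (fun u v : Fin D → Fin N => x ^ hammingDist u v) ↔
      x ∈ Set.Icc (-1 / ((N : ℝ) - 1)) 1 := by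
  have hNR : (2 : ℝ) ≤ (N : ℝ) := by exact_mod_cast hN
  have hN1 : (0 : ℝ) < (N : ℝ) - 1 := by linarith
  have hNpos : (0 : ℝ) < (N : ℝ) := by linarith
  -- the family of points used in the forward direction
  set i0 : Fin D := ⟨0, hD⟩ with hi0
  set v : Fin N → (Fin D → Fin N) := fun a i => if i = i0 then a else ⟨0, by omega⟩ with hv
  have hdist : ∀ a b : Fin N, hammingDist (v a) (v b) = if a = b then 0 else 1 := by
    intro a b
    by_cases hab : a = b
    · subst hab; simp
    · rw [if_neg hab]
      have hfe : ({i | v a i ≠ v b i} : Finset (Fin D)) = {i0} := by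
        ext i
        simp only [hv, Finset.mem_filter, Finset.mem_univ, true_and, Finset.mem_singleton]
        split_ifs with h
        · simp [h, hab]
        · simp [h]
      rw [hammingDist, hfe, Finset.card_singleton]
  constructor
  · intro h
    constructor
    · -- lower bound, use all-ones coefficients on the N points v a
      have key := h N v (fun _ => 1)
      have hre : ∑ a : Fin N, ∑ b : Fin N, x ^ hammingDist (v a) (v b)
          = (N : ℝ) * ((N : ℝ) * x + 1 - x) := by
        have hab : ∀ a b : Fin N, x ^ hammingDist (v a) (v b)
            = x + if a = b then 1 - x else 0 := by
          intro a b
          rw [hdist]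
          split_ifs <;> simp
        simp_rw [hab, Finset.sum_add_distrib, Finset.sum_ite_eq, Finset.mem_univ, if_true,
          Finset.sum_const, Finset.card_univ, Fintype.card_fin, nsmul_eq_mul]
        ring
      have key2 : (0 : ℂ) ≤ (((N : ℝ) * ((N : ℝ) * x + 1 - x) : ℝ) : ℂ) := by
        convert key using 1
        rw [← hre]
        push_cast
        simp
      have hr : (0 : ℝ) ≤ (N : ℝ) * ((N : ℝ) * x + 1 - x) := by
        exact_mod_cast key2
      rw [div_le_iff₀ hN1]
      nlinarith
    · -- upper bound, use coefficients (1, -1) on two points at distance 1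
      have a0 : Fin N := ⟨0, by omega⟩
      have ha01 : (⟨0, by omega⟩ : Fin N) ≠ ⟨1, by omega⟩ := by
        intro hcon
        simpa using congrArg Fin.val hcon
      have key := h 2 ![v ⟨0, by omega⟩, v ⟨1, by omega⟩] ![1, -1]
      have key2 : (0 : ℂ) ≤ (((2 - 2 * x : ℝ)) : ℂ) := by
        convert key using 1
        rw [Fin.sum_univ_two, Fin.sum_univ_two, Fin.sum_univ_two]
        simp only [Matrix.cons_val_zero, Matrix.cons_val_one, Matrix.head_cons]
        rw [hdist, hdist, hdist, hdist, if_pos rfl, if_pos rfl, if_neg ha01,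
          if_neg (Ne.symm ha01)]
        simp only [map_one, map_neg]
        push_cast
        ring
      have hr : (0 : ℝ) ≤ 2 - 2 * x := by exact_mod_cast key2
      linarith
  · -- sufficiency via an explicit feature map
    intro hx n u c
    set φ : Fin N → Fin N ⊕ Unit → ℝ := hamFeat N x with hφ
    set Φ : (Fin D → Fin N) → (Fin D → Fin N ⊕ Unit) → ℝ :=
      fun w f => ∏ i : Fin D, φ (w i) (f i) with hΦ
    have kernel_eq : ∀ w w' : Fin D → Fin N,
        ∑ f : Fin D → Fin N ⊕ Unit, Φ w f * Φ w' f = x ^ hammingDist w w' := by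
      intro w w'
      have hterm : ∀ f : Fin D → Fin N ⊕ Unit,
          Φ w f * Φ w' f = ∏ i : Fin D, (φ (w i) (f i) * φ (w' i) (f i)) := by
        intro f
        rw [hΦ]
        exact (Finset.prod_mul_distrib).symm
      simp_rw [hterm]
      have swap := Finset.prod_univ_sum (fun _ : Fin D => (Finset.univ : Finset (Fin N ⊕ Unit)))
        (fun i k => φ (w i) k * φ (w' i) k)
      rw [Fintype.piFinset_univ] at swap
      rw [← swap]
      have hrow : ∀ i : Fin D, ∑ k : Fin N ⊕ Unit, φ (w i) k * φ (w' i) k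
          = if w i = w' i then 1 else x := fun i => hamFeat_inner hN hx (w i) (w' i)
      simp_rw [hrow]
      rw [Finset.prod_ite, Finset.prod_const_one, one_mul, Finset.prod_const]
      rfl
    have key : ∀ i j : Fin n,
        ((x ^ hammingDist (u i) (u j) : ℝ) : ℂ)
          = ∑ f : Fin D → Fin N ⊕ Unit, ((Φ (u i) f : ℝ) : ℂ) * ((Φ (u j) f : ℝ) : ℂ) := by
      intro i j
      rw [← kernel_eq (u i) (u j)]
      push_cast
      rfl
    have main : ∑ i : Fin n, ∑ j : Fin n, c i * (starRingEnd ℂ) (c j)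
          * ((x ^ hammingDist (u i) (u j) : ℝ) : ℂ)
        = ∑ f : Fin D → Fin N ⊕ Unit,
            (∑ i : Fin n, c i * ((Φ (u i) f : ℝ) : ℂ))
              * (starRingEnd ℂ) (∑ i : Fin n, c i * ((Φ (u i) f : ℝ) : ℂ)) := by
      have rhs_eq : ∀ f : Fin D → Fin N ⊕ Unit,
          (∑ i : Fin n, c i * ((Φ (u i) f : ℝ) : ℂ))
              * (starRingEnd ℂ) (∑ i : Fin n, c i * ((Φ (u i) f : ℝ) : ℂ))
          = ∑ i : Fin n, ∑ j : Fin n,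
              c i * (starRingEnd ℂ) (c j) * (((Φ (u i) f : ℝ) : ℂ) * ((Φ (u j) f : ℝ) : ℂ)) := by
        intro f
        rw [map_sum, Finset.sum_mul_sum]
        refine Finset.sum_congr rfl fun i _ => Finset.sum_congr rfl fun j _ => ?_
        rw [map_mul, Complex.conj_ofReal]
        ring
      simp_rw [rhs_eq, key, Finset.mul_sum]
      exact Eq.trans (Finset.sum_congr rfl fun i _ => Finset.sum_comm) Finset.sum_comm
    show (0:ℂ) ≤ ∑ i : Fin n, ∑ j : Fin n, c i * (starRingEnd ℂ) (c j)
          * ((x ^ hammingDist (u i) (u j) : ℝ) : ℂ)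
    rw [main]
    apply Finset.sum_nonneg
    intro f _
    rw [Complex.mul_conj]
    exact_mod_cast Complex.normSq_nonneg _
end

section
/- The 3×3 matrix D(x) with rows (1, x, x²), (x, (1+9x+8x²)/18, (x+x²)/2), (x², (x+x²)/2, (1+9x+6x²)/16) is positive semidefinite if and only if x ∈ [x₂, 1/2] ∪ {1}, where x₂ = (−9+√65)/16 is the larger root of 16x²+18x+1 = 0. -/
private lemma nn_of_mul {A B : ℝ} (hA : 0 < A) (h : 0 ≤ A * B) : 0 ≤ B := by
  by_contra hB
  push_neg at hB
  nlinarith [mul_pos hA (neg_pos.mpr hB)]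

private lemma quad_nonneg {x a b c : ℝ} (hmpos : 0 < 1 + 9*x - 10*x^2)
    (hdet : 0 ≤ (1-x)^2 * (1-2*x) * (1+4*x) * (16*x^2+18*x+1)) :
    0 ≤ a * (a + x * b + x ^ 2 * c)
        + b * (x * a + (1 + 9 * x + 8 * x ^ 2) / 18 * b + (x + x ^ 2) / 2 * c)
        + c * (x ^ 2 * a + (x + x ^ 2) / 2 * b + (1 + 9 * x + 6 * x ^ 2) / 16 * c) := by
  have key : 18*(1+9*x-10*x^2) * (a * (a + x * b + x ^ 2 * c)
        + b * (x * a + (1 + 9 * x + 8 * x ^ 2) / 18 * b + (x + x ^ 2) / 2 * c)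
        + c * (x ^ 2 * a + (x + x ^ 2) / 2 * b + (1 + 9 * x + 6 * x ^ 2) / 16 * c))
      = 18*(1+9*x-10*x^2)*(a+x*b+x^2*c)^2 + ((1+9*x-10*x^2)*b + (9*(x+x^2)-18*x^3)*c)^2
        + (9/8)*((1-x)^2 * (1-2*x) * (1+4*x) * (16*x^2+18*x+1))*c^2 := by ring
  apply nn_of_mul (show (0:ℝ) < 18*(1+9*x-10*x^2) by linarith)
  rw [key]
  have t1 : 0 ≤ 18*(1+9*x-10*x^2)*(a+x*b+x^2*c)^2 :=
    mul_nonneg (by linarith) (sq_nonneg _)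
  have t2 : 0 ≤ ((1+9*x-10*x^2)*b + (9*(x+x^2)-18*x^3)*c)^2 := sq_nonneg _
  have t3 : 0 ≤ (9/8)*((1-x)^2 * (1-2*x) * (1+4*x) * (16*x^2+18*x+1))*c^2 :=
    mul_nonneg (by linarith) (sq_nonneg _)
  linarith

set_option maxHeartbeats 1000000 in
theorem grassmann_J24_psd_iff (x : ℝ) :
    (Matrix.PosSemidef
      !![1, x, x^2;
         x, (1 + 9*x + 8*x^2)/18, (x + x^2)/2;
         x^2, (x + x^2)/2, (1 + 9*x + 6*x^2)/16]) ↔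
    x ∈ Set.Icc ((-9 + Real.sqrt 65) / 16) (1/2) ∪ {1} := by
  have h65 : Real.sqrt 65 ^ 2 = 65 := Real.sq_sqrt (by norm_num)
  have hs0 : (0:ℝ) ≤ Real.sqrt 65 := Real.sqrt_nonneg 65
  have hs8 : (8:ℝ) ≤ Real.sqrt 65 := by nlinarith
  have hs9 : Real.sqrt 65 ≤ 9 := by nlinarith
  constructor
  · intro h
    have hq : ∀ a b c : ℝ, 0 ≤ a^2 + 2*a*b*x + 2*a*c*x^2 + b^2*((1+9*x+8*x^2)/18)
        + b*c*(x+x^2) + c^2*((1+9*x+6*x^2)/16) := by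
      intro a b c
      have h2 := h.dotProduct_mulVec_nonneg ![a, b, c]
      simp [dotProduct, Matrix.mulVec, Fin.sum_univ_three] at h2
      nlinarith [h2]
    have hm : 0 ≤ 1 + 9*x - 10*x^2 := by
      have := hq (-x) 1 0
      nlinarith [this]
    by_cases hx1 : x = 1
    · right; simp [hx1]
    · left
      by_cases hm0 : 1 + 9*x - 10*x^2 = 0
      · -- then x = -1/10, which gives a negative quadratic form value
        exfalso
        have hfac : (10*x + 1) * (x - 1) = 0 := by linarith
        have hx10 : x = -1/10 := by
          rcases mul_eq_zero.mp hfac with h' | h'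
          · linarith
          · exact absurd (by linarith) hx1
        have := hq (9/100) 1 1
        rw [hx10] at this
        norm_num at this
      · have hmpos : 0 < 1 + 9*x - 10*x^2 := lt_of_le_of_ne hm (Ne.symm hm0)
        -- the scaled determinant inequality
        have hMdet : 0 ≤ (1 + 9*x - 10*x^2) *
            ((1-x)^2 * ((1-2*x) * ((1+4*x) * (16*x^2+18*x+1)))) := by
          have hkey := hq (x*((x+x^2)/2 - x^3) - x^2*((1+9*x-10*x^2)/18))
              (-((x+x^2)/2 - x^3)) ((1+9*x-10*x^2)/18)
          nlinarith [hkey]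
        -- x is in [-1/10, 1]
        have hxge : -(1:ℝ)/10 ≤ x := by nlinarith [hm, sq_nonneg (x + 1/10)]
        have hxle : x ≤ 1 := by nlinarith [hm, sq_nonneg (x - 1)]
        have hxlt : x < 1 := lt_of_le_of_ne hxle hx1
        constructor
        · -- lower bound via 16x²+18x+1 ≥ 0
          have hP : 0 ≤ 16*x^2 + 18*x + 1 := by
            by_contra hPneg
            push_neg at hPneg
            have hx0 : x < 0 := by nlinarith [sq_nonneg x]
            have hA : 0 < (1 + 9*x - 10*x^2) * ((1-x)^2 * ((1-2*x) * (1+4*x))) := by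
              have h1 : (0:ℝ) < (1-x)^2 := pow_pos (by linarith) 2
              have h2 : (0:ℝ) < 1 - 2*x := by linarith
              have h3 : (0:ℝ) < 1 + 4*x := by linarith
              exact mul_pos hmpos (mul_pos h1 (mul_pos h2 h3))
            have := nn_of_mul hA (by nlinarith [hMdet] :
              0 ≤ ((1 + 9*x - 10*x^2) * ((1-x)^2 * ((1-2*x) * (1+4*x)))) * (16*x^2+18*x+1))
            linarith
          have hsq : Real.sqrt 65 ≤ Real.sqrt ((16*x+9)^2) :=
            Real.sqrt_le_sqrt (by nlinarith)
          rw [Real.sqrt_sq (by linarith : (0:ℝ) ≤ 16*x+9)] at hsq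
          linarith
        · -- upper bound x ≤ 1/2
          by_contra hgt
          push_neg at hgt
          have hA : 0 < (1 + 9*x - 10*x^2) * ((1-x)^2 * ((1+4*x) * (16*x^2+18*x+1))) := by
            have h1 : (0:ℝ) < (1-x)^2 := pow_pos (by linarith) 2
            have h3 : (0:ℝ) < 1 + 4*x := by linarith
            have h4 : (0:ℝ) < 16*x^2+18*x+1 := by nlinarith
            exact mul_pos hmpos (mul_pos h1 (mul_pos h3 h4))
          have := nn_of_mul hA (by nlinarith [hMdet] :
            0 ≤ ((1 + 9*x - 10*x^2) * ((1-x)^2 * ((1+4*x) * (16*x^2+18*x+1)))) * (1-2*x))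
          linarith
  · intro hx
    refine Matrix.PosSemidef.of_dotProduct_mulVec_nonneg ?_ ?_
    · -- Hermitian
      show Matrix.conjTranspose _ = _
      ext i j
      fin_cases i <;> fin_cases j <;> rfl
    · intro v
      have hv : star v = v := by simp
      rw [hv]
      rcases hx with hx | hx
      · obtain ⟨hx2, hxh⟩ := hx
        have hxlb : -(1:ℝ)/16 ≤ x := by
          have : (-9 + Real.sqrt 65)/16 ≥ -1/16 := by linarith
          linarith
        have h169 : Real.sqrt 65 ≤ 16*x + 9 := by linarith
        have hP : 0 ≤ 16*x^2 + 18*x + 1 := by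
          nlinarith [mul_nonneg (by linarith : (0:ℝ) ≤ 16*x+9 - Real.sqrt 65)
            (by linarith : (0:ℝ) ≤ 16*x+9 + Real.sqrt 65)]
        have hmpos : 0 < 1 + 9*x - 10*x^2 := by
          nlinarith [mul_pos (show (0:ℝ) < 1 - x by linarith)
            (show (0:ℝ) < 1 + 10*x by linarith)]
        have hdet : 0 ≤ (1-x)^2 * (1-2*x) * (1+4*x) * (16*x^2+18*x+1) := by
          have h2 : (0:ℝ) ≤ 1 - 2*x := by linarith
          have h3 : (0:ℝ) ≤ 1 + 4*x := by linarith
          positivity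
        simp [dotProduct, Matrix.mulVec, Fin.sum_univ_three]
        exact quad_nonneg hmpos hdet
      · simp only [Set.mem_singleton_iff] at hx
        subst hx
        simp [dotProduct, Matrix.mulVec, Fin.sum_univ_three]
        nlinarith [sq_nonneg (v 0 + v 1 + v 2)]
end

section
/- Let a, b ≥ 2 and define polynomials P_n by P₀ = 1, P₁(x) = x, and x·P_n = (1/(a(b−1)))·P_{n−1} + ((b−2)/(a(b−1)))·P_n + ((a−1)/a)·P_{n+1} for n ≥ 1. Then for z ∈ ℂ \ {0, ±1}, the rescaled polynomials P̃_n(x) := P_n((2/a)·√((a−1)/(b−1))·x + (b−2)/(a(b−1))) satisfy P̃_n((z+z⁻¹)/2) = (c(z)·z^n + c(z⁻¹)·z^{−n}) / ((a−1)(b−1))^{n/2}, where c(z) = ((a−1)z − z⁻¹ + (b−2)√(a−1)/√(b−1)) / (a(z − z⁻¹)). -/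
/-- The function `c(z)` appearing in the explicit formula for the Cartier–Dunau
polynomials of the graph `Γ(a,b)`. -/
noncomputable def cFun (a b : ℕ) (z : ℂ) : ℂ :=
  (((a : ℂ) - 1) * z - z⁻¹ +
      ((b : ℂ) - 2) * (Real.sqrt ((a : ℝ) - 1) : ℂ) / (Real.sqrt ((b : ℝ) - 1) : ℂ)) /
    ((a : ℂ) * (z - z⁻¹))

set_option maxHeartbeats 1600000 in
theorem cartier_dunau_explicit_formula (a b : ℕ) (ha : 2 ≤ a) (hb : 2 ≤ b)
    (P : ℕ → ℂ → ℂ)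
    (hP0 : ∀ x : ℂ, P 0 x = 1)
    (hP1 : ∀ x : ℂ, P 1 x = x)
    (hrec : ∀ n : ℕ, 1 ≤ n → ∀ x : ℂ,
      x * P n x = (1 / ((a : ℂ) * ((b : ℂ) - 1))) * P (n - 1) x
        + (((b : ℂ) - 2) / ((a : ℂ) * ((b : ℂ) - 1))) * P n x
        + (((a : ℂ) - 1) / (a : ℂ)) * P (n + 1) x)
    (z : ℂ) (hz0 : z ≠ 0) (hz1 : z ≠ 1) (hzneg1 : z ≠ -1) (n : ℕ) :
    P n ((2 / (a : ℂ)) * (Real.sqrt (((a : ℝ) - 1) / ((b : ℝ) - 1)) : ℂ) * ((z + z⁻¹) / 2)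
        + ((b : ℂ) - 2) / ((a : ℂ) * ((b : ℂ) - 1))) =
      (cFun a b z * z ^ n + cFun a b z⁻¹ * (z⁻¹) ^ n) /
        ((Real.sqrt (((a : ℝ) - 1) * ((b : ℝ) - 1)) : ℂ)) ^ n := by
  have ha' : (2:ℝ) ≤ (a:ℝ) := by exact_mod_cast ha
  have hb' : (2:ℝ) ≤ (b:ℝ) := by exact_mod_cast hb
  set s : ℝ := Real.sqrt ((a:ℝ) - 1) with hs_def
  set t : ℝ := Real.sqrt ((b:ℝ) - 1) with ht_def
  have hs2 : (s:ℂ)^2 = (a:ℂ) - 1 := by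
    rw [hs_def, ← Complex.ofReal_pow, Real.sq_sqrt (by linarith)]
    push_cast; ring
  have ht2 : (t:ℂ)^2 = (b:ℂ) - 1 := by
    rw [ht_def, ← Complex.ofReal_pow, Real.sq_sqrt (by linarith)]
    push_cast; ring
  have hsR : s ≠ 0 := by
    rw [hs_def]; exact Real.sqrt_ne_zero'.mpr (by linarith)
  have htR : t ≠ 0 := by
    rw [ht_def]; exact Real.sqrt_ne_zero'.mpr (by linarith)
  have hsC : (s:ℂ) ≠ 0 := Complex.ofReal_ne_zero.mpr hsR
  have htC : (t:ℂ) ≠ 0 := Complex.ofReal_ne_zero.mpr htR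
  have ha0 : (a:ℂ) ≠ 0 := Nat.cast_ne_zero.mpr (by omega)
  have hA : (a:ℂ) = (s:ℂ)^2 + 1 := by linear_combination -hs2
  have hA1 : (a:ℂ) - 1 = (s:ℂ)^2 := hs2.symm
  have hB1 : (b:ℂ) - 1 = (t:ℂ)^2 := ht2.symm
  have hB2 : (b:ℂ) - 2 = (t:ℂ)^2 - 1 := by linear_combination -ht2
  have hzinv : z * z⁻¹ = 1 := mul_inv_cancel₀ hz0
  have hzz : z^2 - 1 ≠ 0 := by
    intro h
    have h' : (z - 1) * (z + 1) = 0 := by linear_combination h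
    rcases mul_eq_zero.mp h' with h'' | h''
    · exact hz1 (by linear_combination h'')
    · exact hzneg1 (by linear_combination h'')
  have hzi0 : z⁻¹ ≠ 0 := inv_ne_zero hz0
  have hz2 : z - z⁻¹ ≠ 0 := by
    intro h
    apply hzz
    have h3 : (z - z⁻¹) * z = z^2 - 1 := by
      field_simp
    rw [h, zero_mul] at h3
    exact h3.symm
  have hz2' : z⁻¹ - z ≠ 0 := fun h => hz2 (by linear_combination -h)
  have hDne : (a:ℂ) * (z^2 - 1) * (t:ℂ) ≠ 0 :=
    mul_ne_zero (mul_ne_zero ha0 hzz) htC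
  -- closed forms for cFun with a common polynomial denominator
  have hcz : cFun a b z =
      (((s:ℂ)^2 * z^2 - 1) * (t:ℂ) + ((t:ℂ)^2 - 1) * (s:ℂ) * z) /
        ((a:ℂ) * (z^2 - 1) * (t:ℂ)) := by
    rw [cFun, ← hs_def, ← ht_def, hA1, hB2,
      div_eq_div_iff (mul_ne_zero ha0 hz2) hDne]
    field_simp
  have hcz2 : cFun a b z⁻¹ =
      ((z^2 - (s:ℂ)^2) * (t:ℂ) - ((t:ℂ)^2 - 1) * (s:ℂ) * z) /
        ((a:ℂ) * (z^2 - 1) * (t:ℂ)) := by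
    rw [cFun, inv_inv, ← hs_def, ← ht_def, hA1, hB2,
      div_eq_div_iff (mul_ne_zero ha0 hz2') hDne]
    field_simp
    ring
  have hdiv : (Real.sqrt (((a:ℝ) - 1) / ((b:ℝ) - 1)) : ℂ) = (s:ℂ) / (t:ℂ) := by
    rw [Real.sqrt_div (by linarith), ← hs_def, ← ht_def, Complex.ofReal_div]
  have hmul : (Real.sqrt (((a:ℝ) - 1) * ((b:ℝ) - 1)) : ℂ) = (s:ℂ) * (t:ℂ) := by
    rw [Real.sqrt_mul (by linarith), ← hs_def, ← ht_def, Complex.ofReal_mul]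
  rw [hdiv, hmul]
  set x₀ : ℂ := (2 / (a:ℂ)) * ((s:ℂ) / (t:ℂ)) * ((z + z⁻¹) / 2)
      + ((b:ℂ) - 2) / ((a:ℂ) * ((b:ℂ) - 1)) with hx₀
  clear_value x₀
  set G : ℕ → ℂ := fun k => cFun a b z * z ^ k + cFun a b z⁻¹ * (z⁻¹) ^ k with hG
  clear_value G
  -- the rescaled point, cleared of denominators
  have hx : x₀ * ((a:ℂ) * (t:ℂ)^2) = (s:ℂ) * (t:ℂ) * (z + z⁻¹) + ((t:ℂ)^2 - 1) := by
    rw [hx₀, hB1, hB2]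
    field_simp
  have hG0 : G 0 = 1 := by
    simp only [hG, pow_zero, mul_one]
    rw [hcz, hcz2, ← add_div, div_eq_iff hDne]
    linear_combination (-((z^2 - 1) * (t:ℂ))) * hA
  have hG1 : G 1 = x₀ * ((s:ℂ) * (t:ℂ)) := by
    simp only [hG, pow_one]
    rw [hcz, hcz2, div_mul_eq_mul_div, div_mul_eq_mul_div, ← add_div,
      div_eq_iff hDne]
    linear_combination ((t:ℂ) * z - (s:ℂ) * ((t:ℂ)^2 - 1) - (s:ℂ)^2 * (t:ℂ) * z) * hzinv
      - ((s:ℂ) * (z^2 - 1)) * hx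
  have hGrec : ∀ m : ℕ,
      ((s:ℂ) * (t:ℂ)) * (((s:ℂ) * (t:ℂ)) * (z + z⁻¹) + ((t:ℂ)^2 - 1)) * G (m + 1)
        = ((s:ℂ) * (t:ℂ))^2 * G m + ((t:ℂ)^2 - 1) * ((s:ℂ) * (t:ℂ)) * G (m + 1)
          + (s:ℂ)^2 * (t:ℂ)^2 * G (m + 2) := by
    intro m
    simp only [hG]
    linear_combination (((s:ℂ) * (t:ℂ))^2 *
      (cFun a b z * z ^ m + cFun a b z⁻¹ * (z⁻¹) ^ m)) * hzinv
  have key : ∀ m : ℕ, P m x₀ * ((s:ℂ) * (t:ℂ)) ^ m = G m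
      ∧ P (m + 1) x₀ * ((s:ℂ) * (t:ℂ)) ^ (m + 1) = G (m + 1) := by
    intro m
    induction m with
    | zero =>
      constructor
      · rw [hP0, pow_zero, hG0, one_mul]
      · rw [hP1, pow_one, hG1]
    | succ k ih =>
      refine ⟨ih.2, ?_⟩
      have hr := hrec (k + 1) (Nat.le_add_left 1 k) x₀
      simp only [Nat.add_sub_cancel] at hr
      rw [hA1, hB1, hB2] at hr
      field_simp at hr
      have hr'' : (x₀ * P (k + 1) x₀ * ((a:ℂ) * (t:ℂ)^2)) * (a:ℂ)
          = (P k x₀ + ((t:ℂ)^2 - 1) * P (k + 1) x₀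
            + (s:ℂ)^2 * (t:ℂ)^2 * P (k + 2) x₀) * (a:ℂ) := by
        linear_combination (a:ℂ) * hr
      have hr' := mul_right_cancel₀ ha0 hr''
      have e1 : (s:ℂ)^2 * (t:ℂ)^2 * (P (k + 2) x₀ * ((s:ℂ) * (t:ℂ)) ^ (k + 2))
          = (s:ℂ)^2 * (t:ℂ)^2 * G (k + 2) := by
        linear_combination (-(((s:ℂ) * (t:ℂ)) ^ (k + 2))) * hr'
          + (-(((s:ℂ) * (t:ℂ))^2)) * ih.1
          + (((s:ℂ) * (t:ℂ)) ^ (k + 2) * P (k + 1) x₀) * hx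
          + (((s:ℂ) * (t:ℂ))^2 * (z + z⁻¹)) * ih.2
          + hGrec k
      exact mul_left_cancel₀
        (mul_ne_zero (pow_ne_zero _ hsC) (pow_ne_zero _ htC)) e1
  have h := (key n).1
  simp only [hG] at h
  exact (eq_div_iff (pow_ne_zero n (mul_ne_zero hsC htC))).mpr h
end

section
/- Let a, b ≥ 2 and let Γ(a,b) be the infinite distance-transitive graph in which a copies of the complete graph on b vertices are tacked together at every vertex in a tree-like way, with graph distance d. For x ∈ ℝ, the kernel Q_x(u,v) = x^{d(u,v)} (with 0^0 = 1) is positive semidefinite on Γ(a,b) if and only if x ∈ [−1/(b−1), 1]. -/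
open scoped ComplexOrder

/-- `G` is (a graph isomorphic to) Macpherson's infinite distance-transitive graph
`Γ(a,b)`, in which `a` copies of the complete graph on `b` vertices are tacked
together at every vertex in a tree-like way.  It is characterized (as a graph) by
being the connected, infinite-diameter, distance-regular graph with valency
`a(b-1)` and intersection numbers `p^n_{1,n+1} = (a-1)(b-1)`, `p^n_{1,n} = b-2`,
`p^n_{1,n-1} = 1` for `n ≥ 1`. -/
structure IsGammaGraph {V : Type*} (G : SimpleGraph V) (a b : ℕ) : Prop where
  connected : G.Connected
  valency : ∀ v : V, {w : V | G.Adj v w}.ncard = a * (b - 1)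
  forward : ∀ (u v : V) (n : ℕ), 1 ≤ n → G.dist u v = n →
    {z : V | G.Adj v z ∧ G.dist u z = n + 1}.ncard = (a - 1) * (b - 1)
  same : ∀ (u v : V) (n : ℕ), 1 ≤ n → G.dist u v = n →
    {z : V | G.Adj v z ∧ G.dist u z = n}.ncard = b - 2
  backward : ∀ (u v : V) (n : ℕ), 1 ≤ n → G.dist u v = n →
    {z : V | G.Adj v z ∧ G.dist u z = n - 1}.ncard = 1
  unboundedDiam : ∀ n : ℕ, ∃ u v : V, G.dist u v = n

namespace GammaProof

open SimpleGraph Finset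

variable {V : Type*} {G : SimpleGraph V} {a b : ℕ}

lemma nbrFinite (hG : IsGammaGraph G a b) (ha : 2 ≤ a) (hb : 2 ≤ b) (v : V) :
    {w : V | G.Adj v w}.Finite := by
  rw [← Set.not_infinite]
  intro h
  have h0 := h.ncard
  rw [hG.valency v] at h0
  have : b - 1 ≠ 0 := by omega
  have : a * (b - 1) ≠ 0 := by positivity
  exact this h0

lemma adj_dist_one {u v : V} (h : G.Adj u v) : G.dist u v = 1 :=
  SimpleGraph.dist_eq_one_iff_adj.mpr h

/-- The set of common neighbours of the edge `v p` has `b-2` elements. -/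
lemma CN_ncard (hG : IsGammaGraph G a b) {v p : V} (hvp : G.Adj v p) :
    {z : V | G.Adj v z ∧ G.Adj p z}.ncard = b - 2 := by
  have h := hG.same p v 1 le_rfl (adj_dist_one hvp.symm)
  have : {z : V | G.Adj v z ∧ G.dist p z = 1} = {z : V | G.Adj v z ∧ G.Adj p z} := by
    ext z; simp [SimpleGraph.dist_eq_one_iff_adj]
  rwa [this] at h

lemma CN_finite (hG : IsGammaGraph G a b) (ha : 2 ≤ a) (hb : 2 ≤ b) (v p : V) :
    {z : V | G.Adj v z ∧ G.Adj p z}.Finite :=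
  (nbrFinite hG ha hb v).subset (fun z hz => hz.1)

/-- Common neighbours of an edge are pairwise adjacent. -/
lemma CN_clique (hG : IsGammaGraph G a b) {u v z w : V} (huv : G.Adj u v)
    (h1 : G.Adj u z) (h2 : G.Adj v z) (h3 : G.Adj u w) (h4 : G.Adj v w)
    (hzw : z ≠ w) : G.Adj z w := by
  by_contra hadj
  have hd2 : G.dist z w = 2 := by
    have hle : G.dist z w ≤ 2 := by
      have := hG.connected.dist_triangle (u := z) (v := v) (w := w)
      rw [adj_dist_one h2.symm, adj_dist_one h4] at this
      omega
    have hne0 : G.dist z w ≠ 0 := fun h => hzw (hG.connected.dist_eq_zero_iff.mp h)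
    have hne1 : G.dist z w ≠ 1 := fun h => hadj (SimpleGraph.dist_eq_one_iff_adj.mp h)
    omega
  obtain ⟨q, hq⟩ := Set.ncard_eq_one.mp (hG.backward z w 2 (by omega) hd2)
  have hu : u ∈ {y : V | G.Adj w y ∧ G.dist z y = 1} := ⟨h3.symm, adj_dist_one h1.symm⟩
  have hv : v ∈ {y : V | G.Adj w y ∧ G.dist z y = 1} := ⟨h4.symm, adj_dist_one h2.symm⟩
  rw [hq] at hu hv
  exact huv.ne (hu.trans hv.symm)

/-- Uniqueness of the backward neighbour. -/
lemma backward_unique (hG : IsGammaGraph G a b) {o v p : V} {n : ℕ} (hn : 1 ≤ n)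
    (hv : G.dist o v = n) (hvp : G.Adj v p) (hp : G.dist o p = n - 1) :
    ∀ z, G.Adj v z → G.dist o z = n - 1 → z = p := by
  obtain ⟨q, hq⟩ := Set.ncard_eq_one.mp (hG.backward o v n hn hv)
  intro z h1 h2
  have hz : z ∈ {z : V | G.Adj v z ∧ G.dist o z = n - 1} := ⟨h1, h2⟩
  have hpm : p ∈ {z : V | G.Adj v z ∧ G.dist o z = n - 1} := ⟨hvp, hp⟩
  rw [hq] at hz hpm
  exact hz.trans hpm.symm

/-- Existence of the parent. -/
lemma parent_exists (hG : IsGammaGraph G a b) {o v : V} {n : ℕ} (hn : 1 ≤ n)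
    (hv : G.dist o v = n) : ∃ p, G.Adj v p ∧ G.dist o p = n - 1 := by
  obtain ⟨q, hq⟩ := Set.ncard_eq_one.mp (hG.backward o v n hn hv)
  have : q ∈ {z : V | G.Adj v z ∧ G.dist o z = n - 1} := by rw [hq]; rfl
  exact ⟨q, this.1, this.2⟩

/-- A common neighbour of `v` and its parent `p` is at the same level as `v`. -/
lemma CN_level (hG : IsGammaGraph G a b) {o v p z : V} {n : ℕ} (hn : 1 ≤ n)
    (hv : G.dist o v = n) (hvp : G.Adj v p) (hp : G.dist o p = n - 1)
    (hz : G.Adj v z ∧ G.Adj p z) : G.dist o z = n := by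
  have hle : G.dist o z ≤ n := by
    have := hG.connected.dist_triangle (u := o) (v := p) (w := z)
    rw [hp, adj_dist_one hz.2] at this; omega
  have hge : n ≤ G.dist o z + 1 := by
    have := hG.connected.dist_triangle (u := o) (v := z) (w := v)
    rw [hv, adj_dist_one hz.1.symm] at this; omega
  have hne : G.dist o z ≠ n - 1 := by
    intro h
    exact hz.2.ne (backward_unique hG hn hv hvp hp z hz.1 h).symm
  omega

/-- The same-level neighbours of `v` are exactly the common neighbours of `v` and
its parent. -/
lemma sameLevel_eq_CN (hG : IsGammaGraph G a b) (ha : 2 ≤ a) (hb : 2 ≤ b)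
    {o v p : V} {n : ℕ} (hn : 1 ≤ n) (hv : G.dist o v = n) (hvp : G.Adj v p)
    (hp : G.dist o p = n - 1) :
    {z : V | G.Adj v z ∧ G.dist o z = n} = {z : V | G.Adj v z ∧ G.Adj p z} := by
  refine (Set.eq_of_subset_of_ncard_le ?_ ?_ ?_).symm
  · rintro z ⟨h1, h2⟩
    exact ⟨h1, CN_level hG hn hv hvp hp ⟨h1, h2⟩⟩
  · rw [hG.same o v n hn hv, CN_ncard hG hvp]
  · exact (nbrFinite hG ha hb v).subset (fun z hz => hz.1)

/-- If `q` is a sibling of `v` (common neighbour of `v` and parent `p`), then the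
common neighbours of `q` and `p` are `v` together with the common neighbours of
`v` and `p` other than `q`. -/
lemma sibling_CN (hG : IsGammaGraph G a b) (ha : 2 ≤ a) (hb : 2 ≤ b)
    {v p q : V} (hvp : G.Adj v p) (hq : G.Adj v q ∧ G.Adj p q) :
    {z : V | G.Adj q z ∧ G.Adj p z}
      = insert v ({z : V | G.Adj v z ∧ G.Adj p z} \ {q}) := by
  set K := {z : V | G.Adj v z ∧ G.Adj p z} with hK
  have hKfin : K.Finite := CN_finite hG ha hb v p
  have hKcard : K.ncard = b - 2 := CN_ncard hG hvp
  have hqK : q ∈ K := hq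
  have hKpos : 1 ≤ K.ncard := (Set.ncard_pos hKfin).mpr ⟨q, hqK⟩
  have hvnotK : v ∉ K := fun h => G.irrefl h.1
  refine (Set.eq_of_subset_of_ncard_le ?_ ?_ ?_).symm
  · rintro z hz
    rcases Set.mem_insert_iff.mp hz with rfl | hz
    · exact ⟨hq.1.symm, hvp.symm⟩
    · obtain ⟨⟨hz1, hz2⟩, hzq⟩ := hz
      refine ⟨(CN_clique hG hvp hz1 hz2 hq.1 hq.2 ?_).symm, hz2⟩
      exact fun h => hzq (by simp [h])
  · have h1 : {z : V | G.Adj q z ∧ G.Adj p z}.ncard = b - 2 := CN_ncard hG hq.2.symm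
    have h2 : (K \ {q}).ncard = K.ncard - 1 := Set.ncard_diff_singleton_of_mem hqK
    have h3 : (insert v (K \ {q})).ncard = (K \ {q}).ncard + 1 :=
      Set.ncard_insert_of_notMem (fun h => hvnotK h.1) hKfin.diff
    rw [h1, h3, h2, hKcard]
    omega
  · exact (nbrFinite hG ha hb q).subset (fun z hz => hz.1)


/-- Key lemma: if `p` is the parent of `v` (towards `o`), and `w` is a vertex with
`d(o,w) ≤ d(o,v)` which is neither `v` nor a common neighbour of `v` and `p`,
then `d(p,w) = d(v,w) - 1`. -/
lemma dist_parent_add_one (hG : IsGammaGraph G a b) (ha : 2 ≤ a) (hb : 2 ≤ b) (o : V) :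
    ∀ m : ℕ, ∀ v p w : V, G.Adj v p → G.dist o p + 1 = G.dist o v →
      G.dist o w ≤ G.dist o v → w ≠ v → ¬(G.Adj v w ∧ G.Adj p w) →
      G.dist v w = m → G.dist p w + 1 = m := by
  intro m
  induction m using Nat.strong_induction_on with
  | _ m IH =>
    intro v p w hvp hlev hwle hwv hexcl hdvw
    have hcon := hG.connected
    set n := G.dist o v with hn
    have hn1 : 1 ≤ n := by omega
    have hp : G.dist o p = n - 1 := by omega
    have hm1 : 1 ≤ m := by
      rcases Nat.eq_zero_or_pos m with h | h
      · exact absurd (hcon.dist_eq_zero_iff.mp (hdvw.trans h)) (Ne.symm hwv)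
      · exact h
    rcases eq_or_lt_of_le hm1 with hm | hm2
    · -- m = 1 : w is adjacent to v
      have hadj : G.Adj v w := SimpleGraph.dist_eq_one_iff_adj.mp (hdvw.trans hm.symm)
      have hge : n ≤ G.dist o w + 1 := by
        have := hcon.dist_triangle (u := o) (v := w) (w := v)
        rw [adj_dist_one hadj.symm] at this; omega
      have : G.dist o w = n - 1 ∨ G.dist o w = n := by omega
      rcases this with h | h
      · -- w = p
        have : w = p := backward_unique hG hn1 rfl hvp hp w hadj h
        subst this
        rw [SimpleGraph.dist_self]
        omega
      · -- w is a same-level neighbour, hence a common neighbour : contradiction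
        have hw : w ∈ {z : V | G.Adj v z ∧ G.dist o z = n} := ⟨hadj, h⟩
        rw [sameLevel_eq_CN hG ha hb hn1 rfl hvp hp] at hw
        exact absurd hw hexcl
    · -- m ≥ 2
      have hwv' : G.dist w v = m := by rw [SimpleGraph.dist_comm]; exact hdvw
      obtain ⟨q, hvq, hwq⟩ := parent_exists hG (by omega : 1 ≤ m) hwv'
      have hqlev_le : G.dist o q ≤ n + 1 := by
        have := hcon.dist_triangle (u := o) (v := v) (w := q)
        rw [adj_dist_one hvq] at this; omega
      have hqlev_ge : n ≤ G.dist o q + 1 := by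
        have := hcon.dist_triangle (u := o) (v := q) (w := v)
        rw [adj_dist_one hvq.symm] at this; omega
      have hcase : G.dist o q = n - 1 ∨ G.dist o q = n ∨ G.dist o q = n + 1 := by omega
      have hwqne : w ≠ q := by
        intro h
        rw [← h, SimpleGraph.dist_self] at hwq
        omega
      rcases hcase with h | h | h
      · -- q = p
        have : q = p := backward_unique hG hn1 rfl hvp hp q hvq h
        subst this
        rw [SimpleGraph.dist_comm] at hwq
        omega
      · -- q is a sibling of v : use IH with (q, p) and derive a contradiction
        have hqCN : G.Adj v q ∧ G.Adj p q := by
          have hw : q ∈ {z : V | G.Adj v z ∧ G.dist o z = n} := ⟨hvq, h⟩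
          rwa [sameLevel_eq_CN hG ha hb hn1 rfl hvp hp] at hw
        have hexcl2 : ¬(G.Adj q w ∧ G.Adj p w) := by
          rintro ⟨h1, h2⟩
          have hw : w ∈ {z : V | G.Adj q z ∧ G.Adj p z} := ⟨h1, h2⟩
          rw [sibling_CN hG ha hb hvp hqCN] at hw
          rcases Set.mem_insert_iff.mp hw with rfl | hw
          · exact hwv rfl
          · exact hexcl hw.1
        have hIH := IH (m - 1) (by omega) q p w hqCN.2.symm (by omega)
          (by omega) hwqne hexcl2 (by rw [SimpleGraph.dist_comm]; omega)
        -- now d(p,w) + 1 = m - 1, contradicting d(v,w) = m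
        have := hcon.dist_triangle (u := v) (v := p) (w := w)
        rw [adj_dist_one hvp, hdvw] at this
        omega
      · -- q is a child of v : use IH with (q, v) and derive a contradiction
        have hexcl2 : ¬(G.Adj q w ∧ G.Adj v w) := by
          rintro ⟨h1, h2⟩
          have := CN_level hG (by omega : 1 ≤ n + 1) h hvq.symm
            (by omega : G.dist o v = n + 1 - 1) ⟨h1, h2⟩
          omega
        have hIH := IH (m - 1) (by omega) q v w hvq.symm (by omega)
          (by omega) hwqne hexcl2 (by rw [SimpleGraph.dist_comm]; omega)
        omega


noncomputable def Qf (G : SimpleGraph V) (x : ℝ) (c : V → ℝ) (s : Finset V) : ℝ :=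
  ∑ w ∈ s, ∑ w' ∈ s, c w * c w' * x ^ G.dist w w'

lemma Qf_insert [DecidableEq V] {x : ℝ} {c : V → ℝ} {s : Finset V} {p : V} (hp : p ∉ s) :
    Qf G x c (insert p s)
      = Qf G x c s + 2 * (c p * ∑ w ∈ s, c w * x ^ G.dist p w) + (c p)^2 := by
  unfold Qf
  rw [Finset.sum_insert hp]
  simp only [Finset.sum_insert hp]
  rw [SimpleGraph.dist_self, pow_zero, Finset.sum_add_distrib]
  have h1 : ∑ w ∈ s, c w * c p * x ^ G.dist w p
      = c p * ∑ w ∈ s, c w * x ^ G.dist p w := by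
    rw [Finset.mul_sum]
    refine Finset.sum_congr rfl (fun w _ => ?_)
    rw [SimpleGraph.dist_comm]; ring
  have h2 : ∑ w' ∈ s, c p * c w' * x ^ G.dist p w'
      = c p * ∑ w ∈ s, c w * x ^ G.dist p w := by
    rw [Finset.mul_sum]
    exact Finset.sum_congr rfl (fun w _ => by ring)
  rw [h1, h2]
  ring


lemma Qf_nonneg (hG : IsGammaGraph G a b) (ha : 2 ≤ a) (hb : 2 ≤ b) {x : ℝ}
    (hx1 : -1 / ((b:ℝ) - 1) ≤ x) (hx2 : x ≤ 1) (S : Finset V) (c : V → ℝ) :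
    0 ≤ Qf G x c S := by
  classical
  have hcon := hG.connected
  suffices H : ∀ (o : V) (N : ℕ) (S : Finset V) (c : V → ℝ), o ∈ S →
      (∑ w ∈ S, G.dist o w) ≤ N → 0 ≤ Qf G x c S by
    rcases S.eq_empty_or_nonempty with rfl | ⟨o, ho⟩
    · simp [Qf]
    · exact H o _ S c ho le_rfl
  intro o N
  induction N using Nat.strong_induction_on with
  | _ N IH =>
  intro S c hoS hsum
  by_cases hall : ∀ w ∈ S, G.dist o w = 0
  · have hS : S = {o} :=
      Finset.eq_singleton_iff_unique_mem.mpr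
        ⟨hoS, fun w hw => (hcon.dist_eq_zero_iff.mp (hall w hw)).symm⟩
    rw [hS]
    simp only [Qf, Finset.sum_singleton, SimpleGraph.dist_self, pow_zero, mul_one]
    exact mul_self_nonneg _
  push_neg at hall
  obtain ⟨w0, hw0S, hw0⟩ := hall
  obtain ⟨v, hvS, hvmax⟩ := S.exists_max_image (fun w => G.dist o w) ⟨w0, hw0S⟩
  have hn1 : 1 ≤ G.dist o v := by have := hvmax w0 hw0S; omega
  obtain ⟨p, hvp, hplev⟩ := parent_exists hG hn1 rfl
  -- `Z` is the part of `S` in the clique of `v` away from `p`; `W` is the rest.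
  set Z := S.filter (fun z => z = v ∨ (G.Adj v z ∧ G.Adj p z)) with hZ
  set W := S.filter (fun z => ¬(z = v ∨ (G.Adj v z ∧ G.Adj p z))) with hW
  set T := W.erase p with hT
  have hpT : p ∉ T := Finset.notMem_erase _ _
  have hvZ : v ∈ Z := Finset.mem_filter.mpr ⟨hvS, Or.inl rfl⟩
  have hZlev : ∀ z ∈ Z, G.dist o z = G.dist o v := by
    intro z hz
    rcases (Finset.mem_filter.mp hz).2 with h | hzK
    · rw [h]
    · exact CN_level hG hn1 rfl hvp hplev hzK
  have hZp : ∀ z ∈ Z, G.Adj z p := by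
    intro z hz
    rcases (Finset.mem_filter.mp hz).2 with h | hzK
    · rw [h]; exact hvp
    · exact hzK.2.symm
  have hZadj : ∀ z ∈ Z, ∀ z' ∈ Z, z ≠ z' → G.Adj z z' := by
    intro z hz z' hz' hne
    have h1 := (Finset.mem_filter.mp hz).2
    have h2 := (Finset.mem_filter.mp hz').2
    rcases h1 with h1 | h1
    · rcases h2 with h2 | h2
      · exact absurd (h1.trans h2.symm) hne
      · rw [h1]; exact h2.1
    · rcases h2 with h2 | h2
      · rw [h2]; exact h1.1.symm
      · exact CN_clique hG hvp h1.1 h1.2 h2.1 h2.2 hne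
  have hWdist : ∀ w ∈ W, ∀ z ∈ Z, G.dist w z = G.dist p w + 1 := by
    intro w hw z hz
    have hwS := (Finset.mem_filter.mp hw).1
    have hwpred := (Finset.mem_filter.mp hw).2
    by_cases hwp : w = p
    · rw [hwp, SimpleGraph.dist_self, SimpleGraph.dist_comm, adj_dist_one (hZp z hz)]
    · have hzlev := hZlev z hz
      have hexcl : ¬(G.Adj z w ∧ G.Adj p w) := by
        rintro ⟨h1, h2⟩
        rcases (Finset.mem_filter.mp hz).2 with h | hzK
        · rw [h] at h1
          exact hwpred (Or.inr ⟨h1, h2⟩)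
        · have hwmem : w ∈ {y : V | G.Adj z y ∧ G.Adj p y} := ⟨h1, h2⟩
          rw [sibling_CN hG ha hb hvp hzK] at hwmem
          rcases Set.mem_insert_iff.mp hwmem with h | hwmem
          · exact hwpred (Or.inl h)
          · exact hwpred (Or.inr hwmem.1)
      have hwz : w ≠ z := by
        intro h
        exact hwpred (h ▸ (Finset.mem_filter.mp hz).2)
      have hkey := dist_parent_add_one hG ha hb o (G.dist z w) z p w (hZp z hz)
        (by rw [hzlev]; omega)
        (by rw [hzlev]; exact hvmax w hwS)
        hwz hexcl rfl
      rw [SimpleGraph.dist_comm]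
      omega
  -- the coefficients of the reduced configuration
  set σ := ∑ z ∈ Z, c z with hσ
  set β := ∑ w ∈ T, c w * x ^ G.dist p w with hβ
  set γ := (if p ∈ W then c p else 0) + x * σ with hγ
  set c' : V → ℝ := fun y => if y = p then γ else c y with hc'
  set S' := insert p T with hS'
  have hc'T : ∀ w, w ≠ p → c' w = c w := by
    intro w hw
    simp only [hc']
    exact if_neg hw
  have hc'p : c' p = γ := by simp [hc']
  have hsplitf : ∀ {M : Type} [AddCommMonoid M] (f : V → M),
      ∑ w ∈ S, f w = ∑ w ∈ Z, f w + ∑ w ∈ W, f w := by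
    intro M _ f
    rw [hZ, hW]
    exact (Finset.sum_filter_add_sum_filter_not S _ f).symm
  -- symmetric cross term
  have hBsymm : ∑ w ∈ Z, ∑ w' ∈ W, c w * c w' * x ^ G.dist w w'
      = ∑ w ∈ W, ∑ w' ∈ Z, c w * c w' * x ^ G.dist w w' := by
    rw [Finset.sum_comm]
    refine Finset.sum_congr rfl (fun w _ => Finset.sum_congr rfl (fun z _ => ?_))
    rw [SimpleGraph.dist_comm]; ring
  have h0 : Qf G x c S = (∑ z ∈ Z, ∑ z' ∈ Z, c z * c z' * x ^ G.dist z z')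
      + 2 * ∑ w ∈ W, ∑ z ∈ Z, c w * c z * x ^ G.dist w z + Qf G x c W := by
    calc Qf G x c S
        = ∑ w ∈ Z, ∑ w' ∈ S, c w * c w' * x ^ G.dist w w'
          + ∑ w ∈ W, ∑ w' ∈ S, c w * c w' * x ^ G.dist w w' := hsplitf _
      _ = (∑ w ∈ Z, (∑ w' ∈ Z, c w * c w' * x ^ G.dist w w'
            + ∑ w' ∈ W, c w * c w' * x ^ G.dist w w'))
          + ∑ w ∈ W, (∑ w' ∈ Z, c w * c w' * x ^ G.dist w w'
            + ∑ w' ∈ W, c w * c w' * x ^ G.dist w w') := by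
          exact congrArg₂ (· + ·)
            (Finset.sum_congr rfl (fun w _ => hsplitf _))
            (Finset.sum_congr rfl (fun w _ => hsplitf _))
      _ = _ := by
          rw [Finset.sum_add_distrib, Finset.sum_add_distrib, hBsymm]
          simp only [Qf]
          ring
  have hcross : ∑ w ∈ W, ∑ z ∈ Z, c w * c z * x ^ G.dist w z
      = x * σ * ∑ w ∈ W, c w * x ^ G.dist p w := by
    have hterm : ∀ w ∈ W, ∑ z ∈ Z, c w * c z * x ^ G.dist w z
        = (c w * x ^ G.dist p w) * (x * σ) := by
      intro w hw
      calc ∑ z ∈ Z, c w * c z * x ^ G.dist w z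
          = ∑ z ∈ Z, (c w * x ^ G.dist p w) * (x * c z) := by
            refine Finset.sum_congr rfl (fun z hz => ?_)
            rw [hWdist w hw z hz, pow_succ]; ring
        _ = (c w * x ^ G.dist p w) * (x * σ) := by
            rw [← Finset.mul_sum, ← Finset.mul_sum, hσ]
    rw [Finset.sum_congr rfl hterm, ← Finset.sum_mul]
    ring
  have hQZ : ∑ z ∈ Z, ∑ z' ∈ Z, c z * c z' * x ^ G.dist z z'
      = x * σ^2 + (1 - x) * ∑ z ∈ Z, (c z)^2 := by
    have hterm : ∀ z ∈ Z, ∀ z' ∈ Z, c z * c z' * x ^ G.dist z z'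
        = c z * c z' * x + (if z' = z then (c z)^2 * (1 - x) else 0) := by
      intro z hz z' hz'
      by_cases h : z' = z
      · rw [h, SimpleGraph.dist_self, pow_zero, if_pos rfl]; ring
      · rw [adj_dist_one (hZadj z hz z' hz' (Ne.symm h)), pow_one, if_neg h]
        ring
    calc ∑ z ∈ Z, ∑ z' ∈ Z, c z * c z' * x ^ G.dist z z'
        = ∑ z ∈ Z, (∑ z' ∈ Z, c z * c z' * x
            + ∑ z' ∈ Z, if z' = z then (c z)^2 * (1 - x) else 0) := by
          refine Finset.sum_congr rfl (fun z hz => ?_)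
          rw [← Finset.sum_add_distrib]
          exact Finset.sum_congr rfl (fun z' hz' => hterm z hz z' hz')
      _ = ∑ z ∈ Z, ((c z * x) * σ + (c z)^2 * (1 - x)) := by
          refine Finset.sum_congr rfl (fun z hz => ?_)
          congr 1
          · rw [hσ, Finset.mul_sum]
            exact Finset.sum_congr rfl (fun z' _ => by ring)
          · rw [Finset.sum_ite_eq' Z z (fun _ => (c z)^2 * (1 - x)), if_pos hz]
      _ = x * σ^2 + (1 - x) * ∑ z ∈ Z, (c z)^2 := by
          rw [Finset.sum_add_distrib]
          simp only [← Finset.sum_mul]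
          rw [← hσ]
          ring
  have hQS' : Qf G x c' S' = Qf G x c T + 2 * (γ * β) + γ^2 := by
    have e1 : Qf G x c' T = Qf G x c T := by
      unfold Qf
      exact Finset.sum_congr rfl (fun w hw => Finset.sum_congr rfl (fun w' hw' => by
        rw [hc'T w (Finset.ne_of_mem_erase hw), hc'T w' (Finset.ne_of_mem_erase hw')]))
    have e2 : ∑ w ∈ T, c' w * x ^ G.dist p w = β := by
      rw [hβ]
      exact Finset.sum_congr rfl (fun w hw => by rw [hc'T w (Finset.ne_of_mem_erase hw)])
    rw [hS', Qf_insert hpT, e1, e2, hc'p]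
  -- the key algebraic identity
  have hfinal : Qf G x c S
      = Qf G x c' S' + (1 - x) * ((∑ z ∈ Z, (c z)^2) + x * σ^2) := by
    by_cases hpW : p ∈ W
    · have hWT : insert p T = W := by rw [hT]; exact Finset.insert_erase hpW
      have hβW : ∑ w ∈ W, c w * x ^ G.dist p w = c p + β := by
        rw [← hWT, Finset.sum_insert hpT, SimpleGraph.dist_self, pow_zero, hβ]; ring
      have hQW : Qf G x c W = Qf G x c T + 2 * (c p * β) + (c p)^2 := by
        rw [← hWT, Qf_insert hpT, hβ]
      rw [h0, hcross, hQZ, hβW, hQW, hQS', hγ, if_pos hpW]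
      ring
    · have hWT : T = W := by rw [hT]; exact Finset.erase_eq_of_notMem hpW
      have hβW : ∑ w ∈ W, c w * x ^ G.dist p w = β := by rw [hβ, hWT]
      rw [hWT] at hQS'
      rw [h0, hcross, hQZ, hβW, hQS', hγ, if_neg hpW]
      ring
  -- nonnegativity of the remainder
  have hb2R : (2:ℝ) ≤ (b:ℝ) := by exact_mod_cast hb
  have hZcardN : Z.card ≤ b - 1 := by
    have h1 : (Z : Set V) ⊆ insert v {z : V | G.Adj v z ∧ G.Adj p z} := by
      intro z hz
      rcases (Finset.mem_filter.mp (Finset.mem_coe.mp hz)).2 with h | h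
      · exact Or.inl h
      · exact Or.inr h
    calc Z.card = (Z : Set V).ncard := (Set.ncard_coe_finset Z).symm
      _ ≤ (insert v {z : V | G.Adj v z ∧ G.Adj p z}).ncard :=
          Set.ncard_le_ncard h1 ((CN_finite hG ha hb v p).insert v)
      _ ≤ {z : V | G.Adj v z ∧ G.Adj p z}.ncard + 1 := Set.ncard_insert_le _ _
      _ = b - 2 + 1 := by rw [CN_ncard hG hvp]
      _ ≤ b - 1 := by omega
  have hZcard : (Z.card : ℝ) ≤ (b:ℝ) - 1 := by
    calc (Z.card : ℝ) ≤ ((b - 1 : ℕ) : ℝ) := by exact_mod_cast hZcardN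
      _ = (b:ℝ) - 1 := by
          rw [Nat.cast_sub (by omega : 1 ≤ b)]; norm_num
  have hsum_sq : (0:ℝ) ≤ ∑ z ∈ Z, (c z)^2 :=
    Finset.sum_nonneg (fun z _ => sq_nonneg _)
  have hrem : 0 ≤ (∑ z ∈ Z, (c z)^2) + x * σ^2 := by
    have hCS : σ^2 ≤ (Z.card:ℝ) * ∑ z ∈ Z, (c z)^2 := by
      rw [hσ]
      exact_mod_cast sq_sum_le_card_mul_sum_sq (s := Z) (f := c)
    have hb1 : (1:ℝ) ≤ (b:ℝ) - 1 := by linarith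
    have hx1' : -1 ≤ x * ((b:ℝ) - 1) := by
      have := (div_le_iff₀ (by linarith : (0:ℝ) < (b:ℝ) - 1)).mp hx1
      linarith
    nlinarith [sq_nonneg σ, mul_nonneg (sub_nonneg.mpr hZcard) hsum_sq,
      mul_nonneg (by linarith : (0:ℝ) ≤ x * ((b:ℝ) - 1) + 1) (sq_nonneg σ)]
  -- the measure decreases
  have hoW : o ∈ W := by
    refine Finset.mem_filter.mpr ⟨hoS, ?_⟩
    rintro (h | hoK)
    · have h0 : G.dist o v = 0 := by rw [h, SimpleGraph.dist_self]
      omega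
    · have := CN_level hG hn1 rfl hvp hplev hoK
      rw [SimpleGraph.dist_self] at this
      omega
  have hmeas : ∑ w ∈ S', G.dist o w < ∑ w ∈ S, G.dist o w := by
    have h1 : ∑ w ∈ S, G.dist o w = ∑ z ∈ Z, G.dist o z + ∑ w ∈ W, G.dist o w :=
      hsplitf _
    have h2 : ∑ w ∈ S', G.dist o w = G.dist o p + ∑ w ∈ T, G.dist o w := by
      rw [hS', Finset.sum_insert hpT]
    have h4 : ∑ z ∈ Z, G.dist o z = G.dist o v * Z.card := by
      rw [Finset.sum_congr rfl hZlev, Finset.sum_const, smul_eq_mul, Nat.mul_comm]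
    have h5 : 1 ≤ Z.card := Finset.card_pos.mpr ⟨v, hvZ⟩
    have h6 : G.dist o v ≤ G.dist o v * Z.card := Nat.le_mul_of_pos_right _ (by omega)
    by_cases hpW : p ∈ W
    · have h7 : ∑ w ∈ W, G.dist o w = G.dist o p + ∑ w ∈ T, G.dist o w := by
        rw [hT]
        exact (Finset.add_sum_erase W _ hpW).symm
      omega
    · have h7 : T = W := by rw [hT]; exact Finset.erase_eq_of_notMem hpW
      rw [h7] at h2
      omega
  have hoS' : o ∈ S' := by
    rw [hS']
    by_cases hop : o = p
    · rw [hop]; exact Finset.mem_insert_self _ _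
    · exact Finset.mem_insert_of_mem (Finset.mem_erase.mpr ⟨hop, hoW⟩)
  have hIH := IH _ (lt_of_lt_of_le hmeas hsum) S' c' hoS' le_rfl
  rw [hfinal]
  have hmul := mul_nonneg (by linarith : (0:ℝ) ≤ 1 - x) hrem
  linarith


lemma fin_to_Qf [DecidableEq V] {n : ℕ} (u : Fin n → V) (r : Fin n → ℝ) (x : ℝ) :
    ∑ i : Fin n, ∑ j : Fin n, r i * r j * x ^ G.dist (u i) (u j)
      = Qf G x (fun w => ∑ i ∈ Finset.univ.filter (fun i => u i = w), r i)
          (Finset.univ.image u) := by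
  have hmaps : ∀ i ∈ (Finset.univ : Finset (Fin n)), u i ∈ Finset.univ.image u :=
    fun i _ => Finset.mem_image_of_mem u (Finset.mem_univ i)
  symm
  unfold Qf
  calc ∑ w ∈ Finset.univ.image u, ∑ w' ∈ Finset.univ.image u,
        (∑ i ∈ Finset.univ.filter (fun i => u i = w), r i)
          * (∑ i ∈ Finset.univ.filter (fun i => u i = w'), r i) * x ^ G.dist w w'
      = ∑ w ∈ Finset.univ.image u, ∑ w' ∈ Finset.univ.image u,
          ∑ i ∈ Finset.univ.filter (fun i => u i = w),
            ∑ j ∈ Finset.univ.filter (fun i => u i = w'),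
              r i * r j * x ^ G.dist (u i) (u j) := by
        refine Finset.sum_congr rfl fun w hw => Finset.sum_congr rfl fun w' hw' => ?_
        rw [Finset.sum_mul_sum, Finset.sum_mul]
        refine Finset.sum_congr rfl fun i hi => ?_
        rw [Finset.sum_mul]
        refine Finset.sum_congr rfl fun j hj => ?_
        rw [← (Finset.mem_filter.mp hi).2, ← (Finset.mem_filter.mp hj).2]
    _ = ∑ w ∈ Finset.univ.image u,
          ∑ i ∈ Finset.univ.filter (fun i => u i = w),
            ∑ j : Fin n, r i * r j * x ^ G.dist (u i) (u j) := by
        refine Finset.sum_congr rfl fun w hw => ?_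
        rw [Finset.sum_comm]
        exact Finset.sum_congr rfl fun i hi =>
          Finset.sum_fiberwise_of_maps_to hmaps _
    _ = ∑ i : Fin n, ∑ j : Fin n, r i * r j * x ^ G.dist (u i) (u j) :=
        Finset.sum_fiberwise_of_maps_to hmaps _

lemma psd_of_mem_Icc (hG : IsGammaGraph G a b) (ha : 2 ≤ a) (hb : 2 ≤ b) {x : ℝ}
    (hx1 : -1 / ((b:ℝ) - 1) ≤ x) (hx2 : x ≤ 1) :
    IsPSDKernel (fun u v : V => x ^ G.dist u v) := by
  classical
  intro n u c
  simp only
  rw [Complex.le_def]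
  constructor
  · -- real part
    have hre : (∑ i : Fin n, ∑ j : Fin n,
          c i * (starRingEnd ℂ) (c j) * ((x ^ G.dist (u i) (u j) : ℝ) : ℂ)).re
        = (∑ i : Fin n, ∑ j : Fin n, (c i).re * (c j).re * x ^ G.dist (u i) (u j))
          + (∑ i : Fin n, ∑ j : Fin n, (c i).im * (c j).im * x ^ G.dist (u i) (u j)) := by
      rw [Complex.re_sum, ← Finset.sum_add_distrib]
      refine Finset.sum_congr rfl fun i _ => ?_
      rw [Complex.re_sum, ← Finset.sum_add_distrib]
      refine Finset.sum_congr rfl fun j _ => ?_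
      simp only [Complex.mul_re, Complex.mul_im, Complex.conj_re,
        Complex.conj_im, Complex.ofReal_re, Complex.ofReal_im]
      ring
    rw [hre, Complex.zero_re]
    have h1 := Qf_nonneg hG ha hb hx1 hx2 (Finset.univ.image u)
      (fun w => ∑ i ∈ Finset.univ.filter (fun i => u i = w), (c i).re)
    have h2 := Qf_nonneg hG ha hb hx1 hx2 (Finset.univ.image u)
      (fun w => ∑ i ∈ Finset.univ.filter (fun i => u i = w), (c i).im)
    rw [← fin_to_Qf u (fun i => (c i).re) x] at h1
    rw [← fin_to_Qf u (fun i => (c i).im) x] at h2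
    linarith
  · -- imaginary part vanishes
    have hsym : ∀ i j : Fin n,
        (c j * (starRingEnd ℂ) (c i) * ((x ^ G.dist (u j) (u i) : ℝ) : ℂ)).im
          = - (c i * (starRingEnd ℂ) (c j) * ((x ^ G.dist (u i) (u j) : ℝ) : ℂ)).im := by
      intro i j
      rw [SimpleGraph.dist_comm (u := u j)]
      simp only [Complex.mul_re, Complex.mul_im, Complex.conj_re, Complex.conj_im,
        Complex.ofReal_re, Complex.ofReal_im]
      ring
    have him : (∑ i : Fin n, ∑ j : Fin n,
          c i * (starRingEnd ℂ) (c j) * ((x ^ G.dist (u i) (u j) : ℝ) : ℂ)).im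
        = ∑ i : Fin n, ∑ j : Fin n,
            (c i * (starRingEnd ℂ) (c j) * ((x ^ G.dist (u i) (u j) : ℝ) : ℂ)).im := by
      rw [Complex.im_sum]
      exact Finset.sum_congr rfl fun i _ => by rw [Complex.im_sum]
    have hzero : (∑ i : Fin n, ∑ j : Fin n,
        (c i * (starRingEnd ℂ) (c j) * ((x ^ G.dist (u i) (u j) : ℝ) : ℂ)).im) = 0 := by
      have h1 : (∑ i : Fin n, ∑ j : Fin n,
            (c i * (starRingEnd ℂ) (c j) * ((x ^ G.dist (u i) (u j) : ℝ) : ℂ)).im)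
          = ∑ i : Fin n, ∑ j : Fin n,
              - (c i * (starRingEnd ℂ) (c j) * ((x ^ G.dist (u i) (u j) : ℝ) : ℂ)).im := by
        rw [Finset.sum_comm]
        exact Finset.sum_congr rfl fun i _ => Finset.sum_congr rfl fun j _ => hsym i j
      simp only [Finset.sum_neg_distrib] at h1
      linarith
    rw [him, hzero, Complex.zero_im]


/-- Necessity: `x ≤ 1`. -/
lemma le_one_of_psd (hG : IsGammaGraph G a b) {x : ℝ}
    (h : IsPSDKernel (fun u v : V => x ^ G.dist u v)) : x ≤ 1 := by
  obtain ⟨u0, v0, huv⟩ := hG.unboundedDiam 1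
  have hvu : G.dist v0 u0 = 1 := by rw [SimpleGraph.dist_comm]; exact huv
  have hps := h 2 ![u0, v0] ![1, -1]
  have he : (∑ i : Fin 2, ∑ j : Fin 2, (![1, -1] : Fin 2 → ℂ) i
        * (starRingEnd ℂ) ((![1, -1] : Fin 2 → ℂ) j)
        * ((x ^ G.dist ((![u0, v0] : Fin 2 → V) i) ((![u0, v0] : Fin 2 → V) j) : ℝ) : ℂ))
      = ((2 - 2 * x : ℝ) : ℂ) := by
    simp [Fin.sum_univ_two, SimpleGraph.dist_self, huv, hvu]
    push_cast
    ring
  rw [he] at hps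
  have := Complex.zero_le_real.mp hps
  linarith

/-- Necessity: `-1/(b-1) ≤ x`. -/
lemma lower_of_psd (hG : IsGammaGraph G a b) (ha : 2 ≤ a) (hb : 2 ≤ b) {x : ℝ}
    (h : IsPSDKernel (fun u v : V => x ^ G.dist u v)) : -1 / ((b:ℝ) - 1) ≤ x := by
  classical
  obtain ⟨u0, v0, huv⟩ := hG.unboundedDiam 1
  have hadj : G.Adj u0 v0 := SimpleGraph.dist_eq_one_iff_adj.mp huv
  have hKfin : {z : V | G.Adj u0 z ∧ G.Adj v0 z}.Finite := CN_finite hG ha hb u0 v0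
  have hKcard : {z : V | G.Adj u0 z ∧ G.Adj v0 z}.ncard = b - 2 := CN_ncard hG hadj
  set F : Finset V := insert u0 (insert v0 hKfin.toFinset) with hF
  have hu0K : u0 ∉ hKfin.toFinset := by
    rw [Set.Finite.mem_toFinset]; exact fun hc => G.irrefl hc.1
  have hv0K : v0 ∉ hKfin.toFinset := by
    rw [Set.Finite.mem_toFinset]; exact fun hc => G.irrefl hc.2
  have hu0' : u0 ∉ insert v0 hKfin.toFinset := by
    rw [Finset.mem_insert]
    rintro (h' | h')
    · exact hadj.ne h'
    · exact hu0K h'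
  have hcard : F.card = b := by
    rw [hF, Finset.card_insert_of_notMem hu0', Finset.card_insert_of_notMem hv0K]
    have : hKfin.toFinset.card = b - 2 := by
      rw [← Set.ncard_eq_toFinset_card _ hKfin, hKcard]
    omega
  have hFadj : ∀ w ∈ F, ∀ w' ∈ F, w ≠ w' → G.Adj w w' := by
    intro w hw w' hw' hne
    rw [hF, Finset.mem_insert, Finset.mem_insert, Set.Finite.mem_toFinset] at hw hw'
    rcases hw with rfl | rfl | hw <;> rcases hw' with rfl | rfl | hw'
    · exact absurd rfl hne
    · exact hadj
    · exact hw'.1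
    · exact hadj.symm
    · exact absurd rfl hne
    · exact hw'.2
    · exact hw.1.symm
    · exact hw.2.symm
    · exact CN_clique hG hadj hw.1 hw.2 hw'.1 hw'.2 hne
  -- index the clique by `Fin b`
  set e := F.equivFin with he
  set uu : Fin b → V := fun i => (e.symm (Fin.cast hcard.symm i) : V) with huu
  have huumem : ∀ i, uu i ∈ F := fun i => (e.symm (Fin.cast hcard.symm i)).2
  have huuinj : Function.Injective uu := by
    intro i j hij
    have h1 : e.symm (Fin.cast hcard.symm i) = e.symm (Fin.cast hcard.symm j) :=
      Subtype.ext hij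
    have h2 := e.symm.injective h1
    exact Fin.cast_injective _ (by exact h2)
  have hps := h b uu (fun _ => 1)
  have he2 : (∑ i : Fin b, ∑ j : Fin b, (1:ℂ) * (starRingEnd ℂ) 1
        * ((x ^ G.dist (uu i) (uu j) : ℝ) : ℂ))
      = ((∑ i : Fin b, ∑ j : Fin b, x ^ G.dist (uu i) (uu j) : ℝ) : ℂ) := by
    push_cast
    simp
  rw [he2] at hps
  have hreal := Complex.zero_le_real.mp hps
  have hdval : ∀ i j : Fin b, x ^ G.dist (uu i) (uu j) = if i = j then 1 else x := by
    intro i j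
    by_cases hij : i = j
    · rw [hij, SimpleGraph.dist_self, pow_zero, if_pos rfl]
    · rw [if_neg hij,
        adj_dist_one (hFadj _ (huumem i) _ (huumem j) (fun hc => hij (huuinj hc))),
        pow_one]
  have hval : (∑ i : Fin b, ∑ j : Fin b, x ^ G.dist (uu i) (uu j))
      = (b:ℝ) * (x * b + (1 - x)) := by
    have hrow : ∀ i : Fin b, (∑ j : Fin b, x ^ G.dist (uu i) (uu j))
        = x * b + (1 - x) := by
      intro i
      calc ∑ j : Fin b, x ^ G.dist (uu i) (uu j)
          = ∑ j : Fin b, (x + if i = j then (1 - x) else 0) := by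
            refine Finset.sum_congr rfl fun j _ => ?_
            rw [hdval i j]
            by_cases hij : i = j
            · rw [if_pos hij, if_pos hij]; ring
            · rw [if_neg hij, if_neg hij]; ring
        _ = x * b + (1 - x) := by
            rw [Finset.sum_add_distrib, Finset.sum_const, Finset.card_univ,
              Fintype.card_fin, Finset.sum_ite_eq, if_pos (Finset.mem_univ i)]
            push_cast
            ring
    rw [Finset.sum_congr rfl (fun i _ => hrow i), Finset.sum_const, Finset.card_univ,
      Fintype.card_fin]
    push_cast
    ring
  rw [hval] at hreal
  have hbR : (2:ℝ) ≤ (b:ℝ) := by exact_mod_cast hb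
  rw [div_le_iff₀ (by linarith : (0:ℝ) < (b:ℝ) - 1)]
  nlinarith [hreal, hbR]

end GammaProof

theorem gamma_graph_gibbs_psd_iff (a b : ℕ) (ha : 2 ≤ a) (hb : 2 ≤ b)
    {V : Type*} (G : SimpleGraph V) (hG : IsGammaGraph G a b) (x : ℝ) :
    IsPSDKernel (fun u v : V => x ^ G.dist u v) ↔
      x ∈ Set.Icc (-1 / ((b : ℝ) - 1)) 1 := by
  constructor
  · intro h
    exact Set.mem_Icc.mpr ⟨GammaProof.lower_of_psd hG ha hb h, GammaProof.le_one_of_psd hG h⟩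
  · intro hx
    obtain ⟨hx1, hx2⟩ := Set.mem_Icc.mp hx
    exact GammaProof.psd_of_mem_Icc hG ha hb hx1 hx2
end
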